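/- arXiv:1604.04904 — 6 statements merged into one kernel-verified Lean document; each statement's English description precedes it below -/
import Mathlib

section
/- Let h and k be coprime odd positive integers. Then B₁(h,k) = h·s₅(h,k) + 1/(2k) - 1/2. -/
/-- The sawtooth function `((x))`: equals `x - ⌊x⌋ - 1/2` if `x` is not an integer,
and `0` if `x` is an integer. -/
def saw (x : ℚ) : ℚ := if x = (⌊x⌋ : ℚ) then 0 else x - ⌊x⌋ - 1/2

/-- `B₁(h,k) = Σ_{j=1}^{k-1} (-1)^{j+⌊hj/k⌋}·⌊hj/k⌋`. -/
noncomputable def B1 (h k : ℤ) : ℚ :=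
  ∑ j ∈ Finset.Icc (1 : ℤ) (k - 1),
    (-1 : ℚ) ^ (j + ⌊((h * j : ℤ) : ℚ) / (k : ℚ)⌋) * (⌊((h * j : ℤ) : ℚ) / (k : ℚ)⌋ : ℚ)

/-- The Hardy sum `s₅(h,k) = Σ_{j=1}^{k} (-1)^{j+⌊hj/k⌋}·((j/k))`. -/
noncomputable def s5 (h k : ℤ) : ℚ :=
  ∑ j ∈ Finset.Icc (1 : ℤ) k,
    (-1 : ℚ) ^ (j + ⌊((h * j : ℤ) : ℚ) / (k : ℚ)⌋) * saw ((j : ℚ) / (k : ℚ))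

private lemma floorQ (a b : ℤ) (hb : 0 < b) : ⌊(a:ℚ)/(b:ℚ)⌋ = a / b := by
  have hbn : ((b.toNat : ℕ) : ℤ) = b := Int.toNat_of_nonneg hb.le
  rw [← hbn]
  push_cast
  exact Rat.floor_intCast_div_natCast a b.toNat

private lemma neg_one_zpow_congr (a b : ℤ) (hab : a % 2 = b % 2) :
    (-1:ℚ)^a = (-1:ℚ)^b := by
  have h1 : ∀ c : ℤ, (-1:ℚ)^c = (-1:ℚ)^(c % 2) := by
    intro c
    conv_lhs => rw [← Int.emod_add_mul_ediv c 2]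
    rw [zpow_add₀ (by norm_num), zpow_mul]
    norm_num
  rw [h1 a, h1 b, hab]

private lemma altsum (d c : ℚ) : ∀ m : ℕ,
    ∑ x ∈ Finset.range (2*m), (-1:ℚ)^(x+1) * (c - (x+1)*d) = -(m:ℚ)*d := by
  intro m
  induction m with
  | zero => simp
  | succ n ih =>
    have h2n : 2*(n+1) = (2*n)+1+1 := by ring
    rw [h2n, Finset.sum_range_succ, Finset.sum_range_succ, ih]
    have h1 : (-1:ℚ)^(2*n+1) = -1 := by rw [pow_succ, pow_mul]; norm_num
    have h2 : (-1:ℚ)^(2*n+1+1) = 1 := by rw [pow_succ, h1]; norm_num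
    rw [h1, h2]
    push_cast
    ring

theorem stmt_1 (h k : ℤ) (hh : 0 < h) (hk : 0 < k) (hco : IsCoprime h k)
    (hho : Odd h) (hko : Odd k) :
    B1 h k = (h : ℚ) * s5 h k + 1 / (2 * (k : ℚ)) - 1 / 2 := by
  obtain ⟨u, v, huv⟩ := hco
  obtain ⟨a, ha⟩ := hho
  obtain ⟨b, hb⟩ := hko
  have hkQ : (k:ℚ) ≠ 0 := by exact_mod_cast hk.ne'
  -- drop the j = k term of s5
  have hs5 : s5 h k = ∑ j ∈ Finset.Icc (1:ℤ) (k-1),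
      (-1:ℚ)^(j + ⌊((h*j : ℤ):ℚ)/(k:ℚ)⌋) * saw ((j:ℚ)/(k:ℚ)) := by
    unfold s5
    have hins : Finset.Icc (1:ℤ) k = insert k (Finset.Icc 1 (k-1)) := by
      ext x; simp only [Finset.mem_Icc, Finset.mem_insert]; omega
    rw [hins, Finset.sum_insert (by simp [Finset.mem_Icc])]
    have : saw ((k:ℚ)/(k:ℚ)) = 0 := by
      rw [div_self hkQ]; simp [saw]
    rw [this]
    ring
  -- per-term identity
  have key : ∀ j ∈ Finset.Icc (1:ℤ) (k-1),
      (-1:ℚ)^(j + ⌊((h*j : ℤ):ℚ)/(k:ℚ)⌋) * (⌊((h*j : ℤ):ℚ)/(k:ℚ)⌋ : ℚ)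
        - (h:ℚ) * ((-1:ℚ)^(j + ⌊((h*j : ℤ):ℚ)/(k:ℚ)⌋) * saw ((j:ℚ)/(k:ℚ)))
      = (-1:ℚ)^((h*j) % k) * ((h:ℚ)/2 - (((h*j) % k : ℤ):ℚ)/(k:ℚ)) := by
    intro j hj
    rw [Finset.mem_Icc] at hj
    set q := (h*j) / k with hq
    set r := (h*j) % k with hr
    have h2 : k*q + r = h*j := Int.mul_ediv_add_emod _ _
    have hfl : ⌊((h*j : ℤ):ℚ)/(k:ℚ)⌋ = q := floorQ (h*j) k hk
    have hpar : (j + q) % 2 = r % 2 := by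
      have h1 : 2*(a*j) + j = 2*(b*q) + q + r := by
        calc 2*(a*j) + j = h*j := by rw [ha]; ring
          _ = k*q + r := h2.symm
          _ = 2*(b*q) + q + r := by rw [hb]; ring
      generalize a*j = A at h1
      generalize b*q = B at h1
      omega
    have hsign : (-1:ℚ)^(j + q) = (-1:ℚ)^r := neg_one_zpow_congr _ _ hpar
    have hsaw : saw ((j:ℚ)/(k:ℚ)) = (j:ℚ)/(k:ℚ) - 1/2 := by
      have hfl0 : ⌊(j:ℚ)/(k:ℚ)⌋ = 0 := by
        rw [floorQ _ _ hk]; exact Int.ediv_eq_zero_of_lt (by omega) (by omega)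
      have hpos : (0:ℚ) < (j:ℚ)/(k:ℚ) := by
        apply div_pos <;> [exact_mod_cast (by omega : (0:ℤ) < j); exact_mod_cast hk]
      rw [saw, if_neg (by rw [hfl0]; push_cast; exact hpos.ne'), hfl0]
      push_cast; ring
    rw [hfl, hsaw, hsign]
    have h3 : (k:ℚ)*(q:ℚ) + (r:ℚ) = (h:ℚ)*(j:ℚ) := by exact_mod_cast h2
    have hq4 : (q:ℚ) = (h:ℚ)*(j:ℚ)/(k:ℚ) - (r:ℚ)/(k:ℚ) := by
      field_simp
      linarith [h3]
    have hval : (q:ℚ) - (h:ℚ)*((j:ℚ)/(k:ℚ) - 1/2) = (h:ℚ)/2 - (r:ℚ)/(k:ℚ) := by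
      rw [hq4]; ring
    linear_combination ((-1:ℚ)^(r:ℤ)) * hval
  have hsum : B1 h k - (h:ℚ) * s5 h k = ∑ j ∈ Finset.Icc (1:ℤ) (k-1),
      (-1:ℚ)^((h*j) % k) * ((h:ℚ)/2 - (((h*j) % k : ℤ):ℚ)/(k:ℚ)) := by
    rw [hs5]; unfold B1
    rw [Finset.mul_sum, ← Finset.sum_sub_distrib]
    exact Finset.sum_congr rfl key
  -- reindex by the bijection j ↦ (h*j) % k
  have hco' : ∀ x : ℤ, 1 ≤ x → x ≤ k - 1 → (h * x) % k ≠ 0 := by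
    intro x hx1 hx2 hdvd
    have hk_dvd : k ∣ h * x := Int.dvd_of_emod_eq_zero hdvd
    have : k ∣ x := (IsCoprime.dvd_of_dvd_mul_left ⟨v, u, by linear_combination huv⟩ hk_dvd)
    have := Int.le_of_dvd (by omega) this
    omega
  have hbij : (∑ j ∈ Finset.Icc (1:ℤ) (k-1),
      (-1:ℚ)^((h*j) % k) * ((h:ℚ)/2 - (((h*j) % k : ℤ):ℚ)/(k:ℚ)))
      = ∑ r ∈ Finset.Icc (1:ℤ) (k-1), (-1:ℚ)^r * ((h:ℚ)/2 - (r:ℚ)/(k:ℚ)) := by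
    apply Finset.sum_nbij' (fun j => (h*j) % k) (fun r => (u*r) % k)
    · intro x hx
      rw [Finset.mem_Icc] at hx ⊢
      have h1 : 0 ≤ (h*x) % k := Int.emod_nonneg _ hk.ne'
      have h2 : (h*x) % k < k := Int.emod_lt_of_pos _ hk
      have h3 := hco' x hx.1 hx.2
      omega
    · intro x hx
      rw [Finset.mem_Icc] at hx ⊢
      have h1 : 0 ≤ (u*x) % k := Int.emod_nonneg _ hk.ne'
      have h2 : (u*x) % k < k := Int.emod_lt_of_pos _ hk
      have h3 : (u*x) % k ≠ 0 := by
        intro hdvd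
        have hk_dvd : k ∣ u * x := Int.dvd_of_emod_eq_zero hdvd
        have : k ∣ x := IsCoprime.dvd_of_dvd_mul_left ⟨v, h, by linear_combination huv⟩ hk_dvd
        have := Int.le_of_dvd (by omega) this
        omega
      omega
    · intro x hx
      rw [Finset.mem_Icc] at hx
      have e1 : (u * ((h*x) % k)) % k = (u * (h*x)) % k := by
        rw [Int.mul_emod, Int.emod_emod_of_dvd _ dvd_rfl, ← Int.mul_emod]
      have e2 : u * (h*x) = x + k * (-(v*x)) := by linear_combination x * huv
      rw [e1, e2, Int.add_mul_emod_self_left, Int.emod_eq_of_lt (by omega) (by omega)]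
    · intro x hx
      rw [Finset.mem_Icc] at hx
      have e1 : (h * ((u*x) % k)) % k = (h * (u*x)) % k := by
        rw [Int.mul_emod, Int.emod_emod_of_dvd _ dvd_rfl, ← Int.mul_emod]
      have e2 : h * (u*x) = x + k * (-(v*x)) := by linear_combination x * huv
      rw [e1, e2, Int.add_mul_emod_self_left, Int.emod_eq_of_lt (by omega) (by omega)]
    · intro x hx; rfl
  -- evaluate the alternating sum
  have heval : (∑ r ∈ Finset.Icc (1:ℤ) (k-1), (-1:ℚ)^r * ((h:ℚ)/2 - (r:ℚ)/(k:ℚ)))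
      = 1 / (2 * (k:ℚ)) - 1 / 2 := by
    have hb0 : 0 ≤ b := by omega
    have hkn : (k-1).toNat = 2 * b.toNat := by omega
    have hre : (∑ r ∈ Finset.Icc (1:ℤ) (k-1), (-1:ℚ)^r * ((h:ℚ)/2 - (r:ℚ)/(k:ℚ)))
        = ∑ x ∈ Finset.range (2 * b.toNat),
            (-1:ℚ)^(x+1) * ((h:ℚ)/2 - ((x:ℚ)+1)*(1/(k:ℚ))) := by
      rw [← hkn]
      refine Finset.sum_nbij' (i := fun r => (r-1).toNat) (j := fun m => (m:ℤ)+1)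
        ?_ ?_ ?_ ?_ ?_
      · intro x hx; rw [Finset.mem_Icc] at hx; rw [Finset.mem_range]; omega
      · intro x hx; rw [Finset.mem_range] at hx; rw [Finset.mem_Icc]; omega
      · intro x hx; rw [Finset.mem_Icc] at hx; omega
      · intro x hx; omega
      · intro x hx
        rw [Finset.mem_Icc] at hx
        have hx1 : ((x-1).toNat : ℤ) = x - 1 := Int.toNat_of_nonneg (by omega)
        have hpow : (-1:ℚ)^x = (-1:ℚ)^((x-1).toNat + 1) := by
          rw [← zpow_natCast (-1:ℚ) ((x-1).toNat + 1)]
          congr 1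
          push_cast [hx1]
          ring
        rw [hpow]
        congr 1
        have : (((x-1).toNat : ℚ)) = (x:ℚ) - 1 := by exact_mod_cast hx1
        rw [this]
        ring
    rw [hre, altsum]
    have hbQ : ((b.toNat : ℚ)) = (b:ℚ) := by exact_mod_cast Int.toNat_of_nonneg hb0
    have hkQ2 : (k:ℚ) = 2*(b:ℚ)+1 := by exact_mod_cast hb
    rw [hbQ]
    field_simp [hkQ2]
    linarith
  linarith [hsum, hbij, heval]
end

section
/- Let h and k be coprime odd positive integers. Then B₁(h,k) = (h/(4k))·Y(h,k) + 1/(2k) - 1/2. -/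
/-- The Simsek sum `Y(h,k) = 4k·Σ_{j=1}^{k} (-1)^{j+⌊hj/k⌋}·((j/k))`. -/
noncomputable def simsekY (h k : ℤ) : ℚ :=
  4 * k * ∑ j ∈ Finset.Icc (1 : ℤ) k,
    (-1 : ℚ) ^ (j + ⌊((h * j : ℤ) : ℚ) / (k : ℚ)⌋) * saw ((j : ℚ) / (k : ℚ))

lemma myfloor (a b : ℤ) (hb : 0 < b) : ⌊((a:ℚ))/(b:ℚ)⌋ = a / b := by
  obtain ⟨n, rfl⟩ := Int.eq_ofNat_of_zero_le hb.le
  exact_mod_cast Rat.floor_intCast_div_natCast a n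

lemma negone_of_even_sub (m n : ℤ) (hp : Even (m - n)) : (-1:ℚ)^m = (-1:ℚ)^n := by
  obtain ⟨c, hc⟩ := hp
  have : m = n + 2*c := by linarith
  rw [this, zpow_add₀ (by norm_num : (-1:ℚ) ≠ 0), zpow_mul]
  norm_num

lemma key_sum (c q : ℚ) (m : ℕ) :
    ∑ i ∈ Finset.range (2*m), (-1:ℚ)^(i+1) * (c - (i+1)*q) = -m*q := by
  induction m with
  | zero => simp
  | succ n ih =>
    have : 2 * (n+1) = (2*n) + 1 + 1 := by ring
    have h1 : ((-1:ℚ))^(2*n) = 1 := by rw [pow_mul]; norm_num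
    rw [this, Finset.sum_range_succ, Finset.sum_range_succ, ih, pow_succ, pow_succ, h1]
    push_cast
    have h2 : ((-1:ℚ))^(n*2) = 1 := by rw [mul_comm, pow_mul]; norm_num
    ring_nf
    rw [h2]
    ring

lemma saw_mid (j k : ℤ) (hk : 0 < k) (hj : j ∈ Finset.Icc (1:ℤ) (k-1)) :
    saw ((j:ℚ)/(k:ℚ)) = (j:ℚ)/(k:ℚ) - 1/2 := by
  simp only [Finset.mem_Icc] at hj
  have hfl : ⌊(j:ℚ)/(k:ℚ)⌋ = 0 := by
    rw [myfloor j k hk]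
    exact Int.ediv_eq_zero_of_lt (by omega) (by omega)
  have hpos : 0 < (j:ℚ)/(k:ℚ) := by
    apply div_pos <;> exact_mod_cast (by omega : (0:ℤ) < _)
  rw [saw, hfl]
  rw [if_neg (by push_cast; exact ne_of_gt hpos)]
  push_cast
  ring

lemma sign_eq (h k j : ℤ) (hho : Odd h) (hko : Odd k) :
    (-1:ℚ)^(j + (h*j)/k) = (-1:ℚ)^((h*j) % k) := by
  apply negone_of_even_sub
  obtain ⟨a, ha⟩ := hho
  obtain ⟨b, hb⟩ := hko
  have hr : (h*j) % k = h*j - k*((h*j)/k) := by rw [Int.emod_def]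
  refine ⟨-a*j + (b+1)*((h*j)/k), ?_⟩
  rw [hr, ha, hb]; ring

theorem stmt_2 (h k : ℤ) (hh : 0 < h) (hk : 0 < k) (hco : IsCoprime h k)
    (hho : Odd h) (hko : Odd k) :
    B1 h k = ((h : ℚ) / (4 * (k : ℚ))) * simsekY h k + 1 / (2 * (k : ℚ)) - 1 / 2 := by
  obtain ⟨u, v, huv⟩ := hco
  have hk0 : (k:ℚ) ≠ 0 := by exact_mod_cast hk.ne'
  -- divisibility transfer
  have hdvd : ∀ x : ℤ, k ∣ h * x → k ∣ x := by
    intro x hx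
    have hx2 : x = u * (h * x) + (v * x) * k := by linear_combination (-x) * huv
    rw [hx2]
    exact dvd_add (hx.mul_left u) ⟨v*x, by ring⟩
  have hdvdu : ∀ x : ℤ, k ∣ u * x → k ∣ x := by
    intro x hx
    have hx2 : x = h * (u * x) + (v * x) * k := by linear_combination (-x) * huv
    rw [hx2]
    exact dvd_add (hx.mul_left h) ⟨v*x, by ring⟩
  -- the j = k term of the Simsek sum vanishes
  have hYsum : ∑ j ∈ Finset.Icc (1:ℤ) k,
        (-1:ℚ)^(j + ⌊((h*j : ℤ):ℚ)/(k:ℚ)⌋) * saw ((j:ℚ)/(k:ℚ))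
      = ∑ j ∈ Finset.Icc (1:ℤ) (k-1),
        (-1:ℚ)^(j + ⌊((h*j : ℤ):ℚ)/(k:ℚ)⌋) * saw ((j:ℚ)/(k:ℚ)) := by
    have hins : Finset.Icc (1:ℤ) k = insert k (Finset.Icc 1 (k-1)) := by
      ext x; simp only [Finset.mem_Icc, Finset.mem_insert]; omega
    rw [hins, Finset.sum_insert (by simp only [Finset.mem_Icc]; omega)]
    have hsk : saw ((k:ℚ)/(k:ℚ)) = 0 := by
      rw [div_self hk0, saw]
      norm_num
    rw [hsk]; ring
  rw [B1, simsekY, hYsum]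
  set S := ∑ j ∈ Finset.Icc (1:ℤ) (k-1),
      (-1:ℚ)^(j + ⌊((h*j : ℤ):ℚ)/(k:ℚ)⌋) * saw ((j:ℚ)/(k:ℚ)) with hSdef
  have hc : (h:ℚ)/(4*(k:ℚ)) * (4*k*S) = (h:ℚ)*S := by
    field_simp
  rw [hc]
  -- reduce to the difference
  obtain ⟨b, hbk⟩ := id hko
  have hb0 : 0 ≤ b := by omega
  set m := b.toNat with hmdef
  have hmb : (m:ℤ) = b := Int.toNat_of_nonneg hb0
  have hkm : (k:ℚ) = 2*(m:ℚ) + 1 := by exact_mod_cast (by omega : k = 2*(m:ℤ)+1)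
  have hsub : (∑ j ∈ Finset.Icc (1:ℤ) (k-1),
        (-1:ℚ)^(j + ⌊((h*j : ℤ):ℚ)/(k:ℚ)⌋) * (⌊((h*j : ℤ):ℚ)/(k:ℚ)⌋ : ℚ))
      - (h:ℚ) * S = 1/(2*(k:ℚ)) - 1/2 := by
    rw [hSdef, Finset.mul_sum, ← Finset.sum_sub_distrib]
    have hpt : ∀ j ∈ Finset.Icc (1:ℤ) (k-1),
        (-1:ℚ)^(j + ⌊((h*j : ℤ):ℚ)/(k:ℚ)⌋) * (⌊((h*j : ℤ):ℚ)/(k:ℚ)⌋ : ℚ)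
          - (h:ℚ) * ((-1:ℚ)^(j + ⌊((h*j : ℤ):ℚ)/(k:ℚ)⌋) * saw ((j:ℚ)/(k:ℚ)))
        = (-1:ℚ)^((h*j) % k) * ((h:ℚ)/2 - (((h*j) % k : ℤ):ℚ)/(k:ℚ)) := by
      intro j hj
      rw [saw_mid j k hk hj]
      rw [show ⌊((h*j : ℤ):ℚ)/(k:ℚ)⌋ = (h*j)/k from myfloor (h*j) k hk]
      rw [sign_eq h k j hho hko]
      have hEq : ((h:ℚ))*(j:ℚ) = (k:ℚ)*(((h*j)/k : ℤ):ℚ) + (((h*j) % k : ℤ):ℚ) := by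
        exact_mod_cast (Int.mul_ediv_add_emod (h*j) k).symm
      have hf : (((h*j)/k : ℤ):ℚ) = ((h:ℚ)*(j:ℚ) - (((h*j) % k : ℤ):ℚ))/(k:ℚ) := by
        field_simp
        linarith [hEq]
      rw [hf]
      push_cast
      field_simp
      ring
    rw [Finset.sum_congr rfl hpt]
    -- reindex by the bijection j ↦ h*j % k
    have hmem : ∀ (a : ℤ), (∀ x, k ∣ a*x → k ∣ x) →
        ∀ j ∈ Finset.Icc (1:ℤ) (k-1), a*j % k ∈ Finset.Icc (1:ℤ) (k-1) := by
      intro a ha j hj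
      simp only [Finset.mem_Icc] at hj ⊢
      have h1 : 0 ≤ a*j % k := Int.emod_nonneg _ (by omega)
      have h2 : a*j % k < k := Int.emod_lt_of_pos _ hk
      have h3 : a*j % k ≠ 0 := by
        intro h0
        have hd : k ∣ j := ha j (Int.dvd_of_emod_eq_zero h0)
        have := Int.le_of_dvd (by omega) hd
        omega
      omega
    have hml : ∀ (a c x : ℤ), (a * (c*x % k)) % k = (a*c*x) % k := by
      intro a c x
      conv_lhs => rw [Int.mul_emod, Int.emod_emod_of_dvd _ dvd_rfl, ← Int.mul_emod,
        ← mul_assoc]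
    have huh : ∀ x : ℤ, (u*h*x) % k = x % k := by
      intro x
      have hx : u*h*x = x + k * (-(v*x)) := by linear_combination x * huv
      rw [hx, Int.add_mul_emod_self_left]
    have hbij : ∑ j ∈ Finset.Icc (1:ℤ) (k-1),
          (-1:ℚ)^((h*j) % k) * ((h:ℚ)/2 - (((h*j) % k : ℤ):ℚ)/(k:ℚ))
        = ∑ r ∈ Finset.Icc (1:ℤ) (k-1), (-1:ℚ)^r * ((h:ℚ)/2 - ((r : ℤ):ℚ)/(k:ℚ)) := by
      refine Finset.sum_nbij' (fun j => (h*j) % k) (fun r => (u*r) % k)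
        (hmem h hdvd) (hmem u hdvdu) ?_ ?_ ?_
      · intro j hj
        simp only [Finset.mem_Icc] at hj
        show u * (h * j % k) % k = j
        rw [hml, huh, Int.emod_eq_of_lt (by omega) (by omega)]
      · intro r hr
        simp only [Finset.mem_Icc] at hr
        show h * (u * r % k) % k = r
        rw [hml, mul_comm h u, huh, Int.emod_eq_of_lt (by omega) (by omega)]
      · intro j hj; rfl
    rw [hbij]
    -- reindex to a range sum and evaluate
    have hrange : ∑ i ∈ Finset.range (2*m), (-1:ℚ)^(i+1) * ((h:ℚ)/2 - ((i:ℚ)+1)*(1/(k:ℚ)))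
        = ∑ r ∈ Finset.Icc (1:ℤ) (k-1), (-1:ℚ)^r * ((h:ℚ)/2 - ((r : ℤ):ℚ)/(k:ℚ)) := by
      refine Finset.sum_nbij' (fun i => (i:ℤ)+1) (fun r => (r-1).toNat) ?_ ?_ ?_ ?_ ?_
      · intro i hi
        simp only [Finset.mem_range] at hi
        simp only [Finset.mem_Icc]
        omega
      · intro r hr
        simp only [Finset.mem_Icc] at hr
        simp only [Finset.mem_range]
        omega
      · intro i hi
        simp only [Finset.mem_range] at hi
        show (((i:ℤ) + 1 - 1).toNat) = i
        omega
      · intro r hr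
        simp only [Finset.mem_Icc] at hr
        show ((r-1).toNat : ℤ) + 1 = r
        omega
      · intro i hi
        show (-1:ℚ)^(i+1) * ((h:ℚ)/2 - ((i:ℚ)+1)*(1/(k:ℚ)))
            = (-1:ℚ)^((i:ℤ)+1) * ((h:ℚ)/2 - (((i:ℤ)+1 : ℤ):ℚ)/(k:ℚ))
        rw [show ((i:ℤ)) + 1 = ((i + 1 : ℕ) : ℤ) by push_cast; ring, zpow_natCast]
        push_cast
        ring
    rw [← hrange, key_sum ((h:ℚ)/2) (1/(k:ℚ)) m]
    rw [hkm]
    have hkm0 : 2*(m:ℚ) + 1 ≠ 0 := by positivity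
    field_simp
    ring
  linarith
end

section
/- Let h and k be coprime positive integers with h + k odd. Then (k-1)·B₁(h,k) + (h-1)·B₁(k,h) = -(1/2)·(k-1)·(h-1). -/
open Finset

/-- Auxiliary alternating sum. -/
noncomputable def Taux (h k : ℤ) : ℚ := ∑ j ∈ Finset.Icc (1 : ℤ) (k - 1), (-1 : ℚ) ^ (j + h * j / k)

/-- All positive multiples of `h` or `k` below `h*k`. -/
noncomputable def Saux (h k : ℤ) : Finset ℤ :=
  (Finset.Icc (1 : ℤ) (h * k - 1)).filter (fun n => h ∣ n ∨ k ∣ n)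

/-- Rank function. -/
noncomputable def Naux (h k m : ℤ) : ℤ := (((Saux h k).filter (fun n => n ≤ m)).card : ℤ)

lemma floor_cast_div (a b : ℤ) (hb : 0 < b) : ⌊((a : ℚ)) / ((b : ℚ))⌋ = a / b := by
  obtain ⟨n, rfl⟩ : ∃ n : ℕ, b = (n : ℤ) := ⟨b.toNat, (Int.toNat_of_nonneg hb.le).symm⟩
  exact_mod_cast Rat.floor_intCast_div_natCast a n

lemma zpow_neg_one_congr {a b : ℤ} (hab : a % 2 = b % 2) : (-1 : ℚ) ^ a = (-1 : ℚ) ^ b := by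
  rcases Int.even_or_odd a with ha | ha
  · have hb : Even b := by rw [Int.even_iff] at *; omega
    rw [ha.neg_one_zpow, hb.neg_one_zpow]
  · have hb : Odd b := by rw [Int.odd_iff] at *; omega
    rw [ha.neg_one_zpow, hb.neg_one_zpow]

section main
variable {h k : ℤ}

lemma notdvd (hh : 0 < h) (hco : IsCoprime h k) {j : ℤ} (h1 : 1 ≤ j) (h2 : j ≤ k - 1) :
    ¬ k ∣ h * j := by
  intro hd
  have hkj : k ∣ j := hco.symm.dvd_of_dvd_mul_left hd
  have := Int.le_of_dvd (by omega) hkj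
  omega

lemma refl_ediv (hh : 0 < h) (hk : 0 < k) (hco : IsCoprime h k) {j : ℤ}
    (h1 : 1 ≤ j) (h2 : j ≤ k - 1) : h * (k - j) / k = h - 1 - h * j / k := by
  have hnd : ¬ k ∣ h * j := notdvd hh hco h1 h2
  set d := h * j / k with hd
  set r := h * j % k with hr
  have hdm : h * j = k * d + r := (Int.mul_ediv_add_emod (h * j) k).symm
  have hr0 : 0 ≤ r := Int.emod_nonneg _ (by omega)
  have hrk : r < k := Int.emod_lt_of_pos _ hk
  have hrne : r ≠ 0 := fun h0 => hnd (Int.dvd_of_emod_eq_zero h0)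
  have key : (-(h * j)) / k = -d - 1 := by
    have := (Int.ediv_emod_unique (a := -(h * j)) (b := k) (q := -d - 1) (r := k - r) hk).mpr
      ⟨by linarith, by omega, by omega⟩
    exact this.1
  have h0 : h * (k - j) = (-(h * j)) + k * h := by ring
  rw [h0, Int.add_mul_ediv_left _ _ (by omega : k ≠ 0), key]
  ring

lemma two_B1 (hh : 0 < h) (hk : 0 < k) (hco : IsCoprime h k) (hodd : Odd (h + k)) :
    2 * B1 h k = ((h : ℚ) - 1) * Taux h k := by
  have hpar : (h + k) % 2 = 1 := Int.odd_iff.mp hodd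
  have hB : B1 h k = ∑ j ∈ Icc (1 : ℤ) (k - 1),
      (-1 : ℚ) ^ (j + h * j / k) * ((h * j / k : ℤ) : ℚ) := by
    refine Finset.sum_congr rfl fun j hj => ?_
    rw [floor_cast_div (h * j) k hk]
  have hB2 : B1 h k = ∑ j ∈ Icc (1 : ℤ) (k - 1),
      (-1 : ℚ) ^ (j + h * j / k) * (((h - 1 - h * j / k : ℤ)) : ℚ) := by
    rw [hB]
    refine Finset.sum_bij' (fun a _ => k - a) (fun a _ => k - a) ?_ ?_ ?_ ?_ ?_
    · intro a ha
      have ha' := Finset.mem_Icc.mp ha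
      simp only [Finset.mem_Icc]
      omega
    · intro a ha
      have ha' := Finset.mem_Icc.mp ha
      simp only [Finset.mem_Icc]
      omega
    · intro a _; ring
    · intro a _; ring
    · intro a ha
      have ha' := Finset.mem_Icc.mp ha
      have hq : h * (k - a) / k = h - 1 - h * a / k := refl_ediv hh hk hco ha'.1 ha'.2
      show (-1 : ℚ) ^ (a + h * a / k) * ((h * a / k : ℤ) : ℚ)
          = (-1 : ℚ) ^ ((k - a) + h * (k - a) / k) * (((h - 1 - h * (k - a) / k : ℤ)) : ℚ)
      rw [hq, show h - 1 - (h - 1 - h * a / k) = h * a / k from by ring,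
        zpow_neg_one_congr (a := a + h * a / k) (b := (k - a) + (h - 1 - h * a / k)) (by omega)]
  rw [two_mul]
  nth_rewrite 1 [hB]
  rw [hB2, ← Finset.sum_add_distrib, Taux, Finset.mul_sum]
  refine Finset.sum_congr rfl fun j hj => ?_
  push_cast
  ring

lemma rank_eq (hh : 0 < h) (hk : 0 < k) (hco : IsCoprime h k) {j : ℤ}
    (h1 : 1 ≤ j) (h2 : j ≤ k - 1) : Naux h k (h * j) = j + h * j / k := by
  have hinj : Function.Injective (fun i : ℤ => h * i) :=
    fun a b hab => by simpa using mul_left_cancel₀ (by omega : h ≠ 0) hab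
  have kinj : Function.Injective (fun i : ℤ => k * i) :=
    fun a b hab => by simpa using mul_left_cancel₀ (by omega : k ≠ 0) hab
  have hset : (Saux h k).filter (fun n => n ≤ h * j)
      = ((Icc (1 : ℤ) j).image (fun i => h * i))
        ∪ ((Icc (1 : ℤ) (h * j / k)).image (fun i => k * i)) := by
    ext n
    simp only [Saux, Finset.filter_filter, Finset.mem_filter, Finset.mem_Icc, Finset.mem_union,
      Finset.mem_image]
    constructor
    · rintro ⟨⟨hn1, hn2⟩, hdvd, hle⟩
      rcases hdvd with ⟨i, rfl⟩ | ⟨i, rfl⟩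
      · left
        refine ⟨i, ⟨?_, le_of_mul_le_mul_left hle hh⟩, rfl⟩
        by_contra hi
        have : h * i ≤ 0 := mul_nonpos_of_nonneg_of_nonpos hh.le (by omega)
        omega
      · right
        refine ⟨i, ⟨?_, (Int.le_ediv_iff_mul_le hk).mpr (by linarith [mul_comm i k])⟩, rfl⟩
        by_contra hi
        have : k * i ≤ 0 := mul_nonpos_of_nonneg_of_nonpos hk.le (by omega)
        omega
    · rintro (⟨i, ⟨hi1, hi2⟩, rfl⟩ | ⟨i, ⟨hi1, hi2⟩, rfl⟩)
      · have hp : 0 < h * i := mul_pos hh (by omega)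
        have hle : h * i ≤ h * j := mul_le_mul_of_nonneg_left hi2 hh.le
        have hjk : h * j ≤ h * (k - 1) := mul_le_mul_of_nonneg_left (by omega) hh.le
        exact ⟨⟨by omega, by nlinarith⟩, Or.inl ⟨i, rfl⟩, hle⟩
      · have hp : 0 < k * i := mul_pos hk (by omega)
        have hle : k * i ≤ h * j := by
          have := (Int.le_ediv_iff_mul_le hk).mp hi2
          linarith [mul_comm i k]
        have hjk : h * j ≤ h * (k - 1) := mul_le_mul_of_nonneg_left (by omega) hh.le
        exact ⟨⟨by omega, by nlinarith⟩, Or.inr ⟨i, rfl⟩, hle⟩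
  have hdisj : Disjoint ((Icc (1 : ℤ) j).image (fun i => h * i))
      ((Icc (1 : ℤ) (h * j / k)).image (fun i => k * i)) := by
    rw [Finset.disjoint_left]
    rintro n hn1 hn2
    simp only [Finset.mem_image, Finset.mem_Icc] at hn1 hn2
    obtain ⟨i, ⟨hi1, hi2⟩, rfl⟩ := hn1
    obtain ⟨i', ⟨hi'1, hi'2⟩, hi'⟩ := hn2
    have hdvd : h * k ∣ h * i := hco.mul_dvd ⟨i, rfl⟩ ⟨i', hi'.symm⟩
    have hp : 0 < h * i := mul_pos hh (by omega)
    have := Int.le_of_dvd hp hdvd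
    have hle : h * i ≤ h * j := mul_le_mul_of_nonneg_left hi2 hh.le
    have hjk : h * j ≤ h * (k - 1) := mul_le_mul_of_nonneg_left (by omega) hh.le
    nlinarith
  have hdiv0 : 0 ≤ h * j / k := Int.ediv_nonneg (by positivity) hk.le
  rw [Naux, hset, Finset.card_union_of_disjoint hdisj,
    Finset.card_image_of_injective _ hinj, Finset.card_image_of_injective _ kinj,
    Int.card_Icc, Int.card_Icc]
  push_cast
  omega

lemma HK_disjoint (hh : 0 < h) (hk : 0 < k) (hco : IsCoprime h k) :
    Disjoint ((Icc (1 : ℤ) (k - 1)).image (fun i => h * i))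
      ((Icc (1 : ℤ) (h - 1)).image (fun i => k * i)) := by
  rw [Finset.disjoint_left]
  rintro n hn1 hn2
  simp only [Finset.mem_image, Finset.mem_Icc] at hn1 hn2
  obtain ⟨i, ⟨hi1, hi2⟩, rfl⟩ := hn1
  obtain ⟨i', ⟨hi'1, hi'2⟩, hi'⟩ := hn2
  have hdvd : h * k ∣ h * i := hco.mul_dvd ⟨i, rfl⟩ ⟨i', hi'.symm⟩
  have hp : 0 < h * i := mul_pos hh (by omega)
  have := Int.le_of_dvd hp hdvd
  have hle : h * i ≤ h * (k - 1) := mul_le_mul_of_nonneg_left (by omega) hh.le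
  nlinarith

lemma S_decomp (hh : 0 < h) (hk : 0 < k) :
    Saux h k = ((Icc (1 : ℤ) (k - 1)).image (fun i => h * i))
        ∪ ((Icc (1 : ℤ) (h - 1)).image (fun i => k * i)) := by
  ext n
  simp only [Saux, Finset.mem_filter, Finset.mem_Icc, Finset.mem_union, Finset.mem_image]
  constructor
  · rintro ⟨⟨hn1, hn2⟩, hdvd⟩
    rcases hdvd with ⟨i, rfl⟩ | ⟨i, rfl⟩
    · left
      refine ⟨i, ⟨?_, ?_⟩, rfl⟩
      · by_contra hi
        have : h * i ≤ 0 := mul_nonpos_of_nonneg_of_nonpos hh.le (by omega)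
        omega
      · have h1 : h * i < h * k := by omega
        have := lt_of_mul_lt_mul_left h1 hh.le
        omega
    · right
      refine ⟨i, ⟨?_, ?_⟩, rfl⟩
      · by_contra hi
        have : k * i ≤ 0 := mul_nonpos_of_nonneg_of_nonpos hk.le (by omega)
        omega
      · have h1 : k * i < k * h := by nlinarith [mul_comm h k]
        have := lt_of_mul_lt_mul_left h1 hk.le
        omega
  · rintro (⟨i, ⟨hi1, hi2⟩, rfl⟩ | ⟨i, ⟨hi1, hi2⟩, rfl⟩)
    · have hp : 0 < h * i := mul_pos hh (by omega)
      have hle : h * i ≤ h * (k - 1) := mul_le_mul_of_nonneg_left (by omega) hh.le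
      exact ⟨⟨by omega, by nlinarith⟩, Or.inl ⟨i, rfl⟩⟩
    · have hp : 0 < k * i := mul_pos hk (by omega)
      have hle : k * i ≤ k * (h - 1) := mul_le_mul_of_nonneg_left (by omega) hk.le
      exact ⟨⟨by omega, by nlinarith [mul_comm h k]⟩, Or.inr ⟨i, rfl⟩⟩

lemma Saux_symm : Saux k h = Saux h k := by
  ext n
  simp only [Saux, Finset.mem_filter, Finset.mem_Icc]
  constructor
  · rintro ⟨⟨a, b⟩, c | c⟩ <;> exact ⟨⟨a, by nlinarith [mul_comm h k]⟩, by tauto⟩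
  · rintro ⟨⟨a, b⟩, c | c⟩ <;> exact ⟨⟨a, by nlinarith [mul_comm h k]⟩, by tauto⟩

lemma Naux_symm (m : ℤ) : Naux k h m = Naux h k m := by
  unfold Naux
  rw [Saux_symm]

lemma T_image (hh : 0 < h) (hk : 0 < k) (hco : IsCoprime h k) :
    Taux h k = ∑ m ∈ (Icc (1 : ℤ) (k - 1)).image (fun i => h * i), (-1 : ℚ) ^ (Naux h k m) := by
  rw [Finset.sum_image (fun a _ b _ hab => mul_left_cancel₀ (by omega : h ≠ 0) hab)]
  refine Finset.sum_congr rfl fun j hj => ?_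
  have hj' := Finset.mem_Icc.mp hj
  rw [rank_eq hh hk hco hj'.1 hj'.2]

lemma N_strictmono (hh : 0 < h) (hk : 0 < k) {a b : ℤ} (ha : a ∈ Saux h k) (hb : b ∈ Saux h k)
    (hab : a < b) : Naux h k a < Naux h k b := by
  have hss : (Saux h k).filter (fun n => n ≤ a) ⊂ (Saux h k).filter (fun n => n ≤ b) := by
    refine Finset.ssubset_iff_of_subset (Finset.monotone_filter_right _ fun n hn => by omega)
      |>.mpr ⟨b, ?_, ?_⟩
    · exact Finset.mem_filter.mpr ⟨hb, le_refl b⟩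
    · intro hc
      exact absurd (Finset.mem_filter.mp hc).2 (by omega)
  simp only [Naux]
  exact_mod_cast Finset.card_lt_card hss

lemma sum_neg_one_Icc {n : ℤ} (hn : Odd n) (hn0 : 0 < n) :
    ∑ i ∈ Icc (1 : ℤ) n, (-1 : ℚ) ^ i = -1 := by
  have hodd : n % 2 = 1 := Int.odd_iff.mp hn
  have hre : ∑ i ∈ Icc (1 : ℤ) n, (-1 : ℚ) ^ i
      = ∑ i ∈ Finset.range n.toNat, (-1 : ℚ) ^ ((i : ℤ) + 1) := by
    refine Finset.sum_bij' (fun a _ => (a - 1).toNat) (fun a _ => (a : ℤ) + 1) ?_ ?_ ?_ ?_ ?_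
    · intro a ha
      have ha' := Finset.mem_Icc.mp ha
      simp only [Finset.mem_range]
      omega
    · intro a ha
      have ha' := Finset.mem_range.mp ha
      simp only [Finset.mem_Icc]
      omega
    · intro a ha
      have ha' := Finset.mem_Icc.mp ha
      show (((a - 1).toNat : ℤ)) + 1 = a
      omega
    · intro a ha
      show (((a : ℤ) + 1 - 1).toNat : ℕ) = a
      omega
    · intro a ha
      have ha' := Finset.mem_Icc.mp ha
      show (-1 : ℚ) ^ a = (-1 : ℚ) ^ ((((a - 1).toNat : ℤ)) + 1)
      congr 1
      omega
  rw [hre]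
  have hx : ∀ i : ℕ, (-1 : ℚ) ^ ((i : ℤ) + 1) = (-1 : ℚ) ^ (i : ℕ) * (-1) := by
    intro i
    rw [zpow_add₀ (by norm_num : (-1 : ℚ) ≠ 0), zpow_natCast, zpow_one]
  simp_rw [hx]
  rw [← Finset.sum_mul, neg_one_geom_sum]
  have hne : ¬ Even n.toNat := by
    rw [Nat.even_iff]; omega
  simp [hne]

lemma T_recip (hh : 0 < h) (hk : 0 < k) (hco : IsCoprime h k) (hodd : Odd (h + k)) :
    Taux h k + Taux k h = -1 := by
  have hpar : (h + k) % 2 = 1 := Int.odd_iff.mp hodd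
  have hcard : ((Saux h k).card : ℤ) = h + k - 2 := by
    rw [S_decomp hh hk, Finset.card_union_of_disjoint (HK_disjoint hh hk hco),
      Finset.card_image_of_injective _
        (fun a b hab => mul_left_cancel₀ (by omega : h ≠ 0) hab : Function.Injective fun i => h * i),
      Finset.card_image_of_injective _
        (fun a b hab => mul_left_cancel₀ (by omega : k ≠ 0) hab : Function.Injective fun i => k * i),
      Int.card_Icc, Int.card_Icc]
    push_cast
    omega
  have hsum : Taux h k + Taux k h = ∑ m ∈ Saux h k, (-1 : ℚ) ^ (Naux h k m) := by
    rw [T_image hh hk hco, T_image hk hh hco.symm]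
    simp_rw [Naux_symm]
    rw [S_decomp hh hk, Finset.sum_union (HK_disjoint hh hk hco)]
  have hmain : ∑ m ∈ Saux h k, (-1 : ℚ) ^ (Naux h k m)
      = ∑ i ∈ Icc (1 : ℤ) (h + k - 2), (-1 : ℚ) ^ i := by
    have hi : ∀ a (ha : a ∈ Saux h k), Naux h k a ∈ Icc (1 : ℤ) (h + k - 2) := by
      intro a ha
      simp only [Finset.mem_Icc]
      constructor
      · have hmem : a ∈ (Saux h k).filter (fun n => n ≤ a) :=
          Finset.mem_filter.mpr ⟨ha, le_refl a⟩
        have hpos := Finset.card_pos.mpr ⟨a, hmem⟩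
        simp only [Naux]
        exact_mod_cast hpos
      · have hle := Finset.card_le_card (Finset.filter_subset (fun n => n ≤ a) (Saux h k))
        simp only [Naux]
        omega
    have hinj : ∀ a₁ a₂ (ha₁ : a₁ ∈ Saux h k) (ha₂ : a₂ ∈ Saux h k),
        Naux h k a₁ = Naux h k a₂ → a₁ = a₂ := by
      intro a b ha hb hab
      by_contra hne
      rcases lt_or_gt_of_ne hne with hlt | hlt
      · exact absurd hab (ne_of_lt (N_strictmono hh hk ha hb hlt))
      · exact absurd hab.symm (ne_of_lt (N_strictmono hh hk hb ha hlt))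
    refine Finset.sum_bij (fun a _ => Naux h k a) hi
      (fun a₁ ha₁ a₂ ha₂ => hinj a₁ a₂ ha₁ ha₂) ?_ (fun a _ => rfl)
    · intro b hb
      obtain ⟨a, ha, hab⟩ := Finset.surj_on_of_inj_on_of_card_le (fun a _ => Naux h k a) hi
        (fun a₁ a₂ ha₁ ha₂ => hinj a₁ a₂ ha₁ ha₂) (by rw [Int.card_Icc]; omega) b hb
      exact ⟨a, ha, hab.symm⟩
  rw [hsum, hmain]
  exact sum_neg_one_Icc (Int.odd_iff.mpr (by omega)) (by omega)

end main

theorem stmt_3 (h k : ℤ) (hh : 0 < h) (hk : 0 < k) (hco : IsCoprime h k)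
    (hodd : Odd (h + k)) :
    ((k : ℚ) - 1) * B1 h k + ((h : ℚ) - 1) * B1 k h
      = -(1 / 2) * ((k : ℚ) - 1) * ((h : ℚ) - 1) := by
  have e1 := two_B1 hh hk hco hodd
  have e2 := two_B1 hk hh hco.symm (by rwa [add_comm])
  have e3 := T_recip hh hk hco hodd
  linear_combination (((k : ℚ) - 1) / 2) * e1 + (((h : ℚ) - 1) / 2) * e2
    + ((((h : ℚ) - 1) * ((k : ℚ) - 1)) / 2) * e3
end

section
/- Let h and k be coprime positive integers with h + k odd. Then Y₁(h,k) + Y₁(k,h) = 2(k-1)·B₁(h,k) + 2(h-1)·B₁(k,h). -/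
/-- `Y₁(h,k) = Σ_{j=1}^{k-1} (2j-1)·(-1)^{j+⌊hj/k⌋}·⌊hj/k⌋`. -/
noncomputable def Y1 (h k : ℤ) : ℚ :=
  ∑ j ∈ Finset.Icc (1 : ℤ) (k - 1),
    (2 * (j : ℚ) - 1) * (-1 : ℚ) ^ (j + ⌊((h * j : ℤ) : ℚ) / (k : ℚ)⌋)
      * (⌊((h * j : ℤ) : ℚ) / (k : ℚ)⌋ : ℚ)

lemma floor_div_int (a b : ℤ) (hb : 0 < b) :
    ⌊((a : ℚ) / (b : ℚ))⌋ = a / b := by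
  lift b to ℕ using hb.le
  exact_mod_cast Rat.floor_intCast_div_natCast a b

lemma inv_neg_one_zpow (m : ℤ) : ((-1 : ℚ) ^ m)⁻¹ = (-1 : ℚ) ^ m := by
  rw [← zpow_neg]
  rcases Int.even_or_odd m with he | ho
  · rw [he.neg_one_zpow, (he.neg).neg_one_zpow]
  · rw [ho.neg_one_zpow, (ho.neg).neg_one_zpow]

lemma teleN (n : ℕ) :
    ∑ i ∈ Finset.Icc (1 : ℤ) (n : ℤ), ((-1 : ℚ) ^ i * (2 * (i : ℚ) - 1))
      = (-1 : ℚ) ^ (n : ℤ) * ((n : ℤ) : ℚ) := by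
  induction n with
  | zero => simp
  | succ n ih =>
    have hins : Finset.Icc (1 : ℤ) ((n : ℤ) + 1) = insert ((n : ℤ) + 1) (Finset.Icc 1 (n : ℤ)) := by
      ext x; simp only [Finset.mem_Icc, Finset.mem_insert]; omega
    have hnm : ((n : ℤ) + 1) ∉ Finset.Icc (1 : ℤ) (n : ℤ) := by
      simp only [Finset.mem_Icc]; omega
    push_cast
    rw [hins, Finset.sum_insert hnm, ih,
      zpow_add₀ (by norm_num : (-1:ℚ) ≠ 0) (n : ℤ) 1, zpow_one]
    push_cast
    ring

lemma tele (f : ℤ) (hf : 0 ≤ f) :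
    ∑ i ∈ Finset.Icc (1 : ℤ) f, ((-1 : ℚ) ^ i * (2 * (i : ℚ) - 1))
      = (-1 : ℚ) ^ f * (f : ℚ) := by
  obtain ⟨n, rfl⟩ := Int.eq_ofNat_of_zero_le hf
  exact teleN n

/-- Counting lemma: the floor term expanded as an alternating lattice-point count. -/
lemma count (h k j : ℤ) (hh : 0 < h) (hk : 0 < k) (hco : IsCoprime h k)
    (hj1 : 1 ≤ j) (hj2 : j ≤ k - 1) :
    ∑ i ∈ Finset.Icc (1 : ℤ) (h - 1),
        (if i * k < j * h then ((-1 : ℚ) ^ i * (2 * (i : ℚ) - 1)) else 0)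
      = (-1 : ℚ) ^ (h * j / k) * ((h * j / k : ℤ) : ℚ) := by
  set f := h * j / k with hfdef
  have hf0 : 0 ≤ f := Int.ediv_nonneg (by positivity) hk.le
  have hflt : f < h := by
    rw [hfdef, Int.ediv_lt_iff_lt_mul hk]
    nlinarith
  have hne : ∀ i : ℤ, 1 ≤ i → i < h → i * k ≠ h * j := by
    intro i hi1 hih heq
    have hdvd : h ∣ i * k := ⟨j, heq⟩
    have : h ∣ i := hco.dvd_of_dvd_mul_right hdvd
    have := Int.le_of_dvd (by omega) this
    omega
  have hfilter : (Finset.Icc (1 : ℤ) (h - 1)).filter (fun i => i * k < j * h)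
      = Finset.Icc (1 : ℤ) f := by
    ext i
    simp only [Finset.mem_filter, Finset.mem_Icc]
    constructor
    · rintro ⟨⟨h1, h2⟩, h3⟩
      refine ⟨h1, ?_⟩
      rw [hfdef, Int.le_ediv_iff_mul_le hk]
      nlinarith
    · rintro ⟨h1, h2⟩
      have hle : i * k ≤ h * j := (Int.le_ediv_iff_mul_le hk).mp (hfdef ▸ h2)
      have hlt : i * k < h * j := lt_of_le_of_ne hle (hne i h1 (by omega))
      exact ⟨⟨h1, by omega⟩, by nlinarith⟩
  rw [← Finset.sum_filter, hfilter, tele f hf0]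

/-- Key rewrite: `Y₁(h,k) - 2(k-1)B₁(h,k)` as an alternating double sum over lattice points. -/
lemma key (h k : ℤ) (hh : 0 < h) (hk : 0 < k) (hco : IsCoprime h k) :
    Y1 h k - 2 * ((k : ℚ) - 1) * B1 h k
      = ∑ j ∈ Finset.Icc (1 : ℤ) (k - 1), ∑ i ∈ Finset.Icc (1 : ℤ) (h - 1),
          (if i * k < j * h then
             (-1 : ℚ) ^ (i + j) * (2 * (j : ℚ) - 2 * (k : ℚ) + 1) * (2 * (i : ℚ) - 1)
           else 0) := by
  unfold Y1 B1
  rw [Finset.mul_sum, ← Finset.sum_sub_distrib]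
  refine Finset.sum_congr rfl fun j hj => ?_
  obtain ⟨hj1, hj2⟩ := Finset.mem_Icc.mp hj
  rw [floor_div_int _ _ hk]
  have h1 : ∑ i ∈ Finset.Icc (1:ℤ) (h-1), (if i * k < j * h then
        (-1:ℚ)^(i+j) * (2*(j:ℚ)-2*(k:ℚ)+1) * (2*(i:ℚ)-1) else 0)
      = ((-1:ℚ)^j * (2*(j:ℚ)-2*(k:ℚ)+1)) * ∑ i ∈ Finset.Icc (1:ℤ) (h-1),
          (if i * k < j * h then ((-1:ℚ)^i * (2*(i:ℚ)-1)) else 0) := by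
    rw [Finset.mul_sum]
    refine Finset.sum_congr rfl fun i _ => ?_
    split
    · rw [zpow_add₀ (by norm_num : (-1:ℚ) ≠ 0)]; ring
    · ring
  rw [h1, count h k j hh hk hco hj1 hj2,
      zpow_add₀ (by norm_num : (-1:ℚ) ≠ 0)]
  ring

theorem stmt_5 (h k : ℤ) (hh : 0 < h) (hk : 0 < k) (hco : IsCoprime h k)
    (hodd : Odd (h + k)) :
    Y1 h k + Y1 k h = 2 * ((k : ℚ) - 1) * B1 h k + 2 * ((h : ℚ) - 1) * B1 k h := by
  classical
  have E1 := key h k hh hk hco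
  have E2 := key k h hk hh hco.symm
  set Jh := Finset.Icc (1 : ℤ) (h - 1) with hJh
  set Jk := Finset.Icc (1 : ℤ) (k - 1) with hJk
  set F : ℤ × ℤ → ℚ := fun p =>
    if p.1 * k < p.2 * h then
      (-1 : ℚ) ^ (p.1 + p.2) * (2 * (p.2 : ℚ) - 2 * (k : ℚ) + 1) * (2 * (p.1 : ℚ) - 1)
    else if p.2 * h < p.1 * k then
      (-1 : ℚ) ^ (p.1 + p.2) * (2 * (p.1 : ℚ) - 2 * (h : ℚ) + 1) * (2 * (p.2 : ℚ) - 1)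
    else 0 with hF
  have hsum0 : ∑ p ∈ Jh ×ˢ Jk, F p = 0 := by
    refine Finset.sum_involution (fun p _ => (h - p.1, k - p.2)) ?_ ?_ ?_ ?_
    · rintro ⟨a, b⟩ hp
      simp only [Finset.mem_product, Finset.mem_Icc, hJh, hJk] at hp
      obtain ⟨⟨ha1, ha2⟩, hb1, hb2⟩ := hp
      have sign : (-1 : ℚ) ^ ((h - a) + (k - b)) = -((-1 : ℚ) ^ (a + b)) := by
        have hex : (h - a) + (k - b) = (h + k) + (-(a + b)) := by ring
        rw [hex, zpow_add₀ (by norm_num : (-1:ℚ) ≠ 0), hodd.neg_one_zpow, zpow_neg,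
          inv_neg_one_zpow]
        ring
      have e1 : ((h - a) * k < (k - b) * h) ↔ (b * h < a * k) := by
        constructor <;> intro hx <;> nlinarith
      have e2 : ((k - b) * h < (h - a) * k) ↔ (a * k < b * h) := by
        constructor <;> intro hx <;> nlinarith
      simp only [hF, e1, e2]
      rcases lt_trichotomy (a * k) (b * h) with hc | hc | hc
      · rw [if_pos hc, if_neg (by omega), if_pos hc, sign]
        push_cast
        ring
      · rw [if_neg (by omega), if_neg (by omega), if_neg (by omega), if_neg (by omega)]
        ring
      · rw [if_neg (by omega), if_pos hc, if_pos hc, sign]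
        push_cast
        ring
    · rintro ⟨a, b⟩ hp _ heq
      obtain ⟨m, hm⟩ := hodd
      have h1 : h - a = a := congrArg Prod.fst heq
      have h2 : k - b = b := congrArg Prod.snd heq
      omega
    · rintro ⟨a, b⟩ hp
      simp only [Finset.mem_product, Finset.mem_Icc, hJh, hJk] at hp ⊢
      omega
    · rintro ⟨a, b⟩ _
      simp
  have hsplit : ∑ p ∈ Jh ×ˢ Jk, F p
      = (∑ j ∈ Jk, ∑ i ∈ Jh,
          (if i * k < j * h then
            (-1 : ℚ) ^ (i + j) * (2 * (j : ℚ) - 2 * (k : ℚ) + 1) * (2 * (i : ℚ) - 1)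
          else 0))
      + (∑ j ∈ Jh, ∑ i ∈ Jk,
          (if i * h < j * k then
            (-1 : ℚ) ^ (i + j) * (2 * (j : ℚ) - 2 * (h : ℚ) + 1) * (2 * (i : ℚ) - 1)
          else 0)) := by
    rw [Finset.sum_product, Finset.sum_comm,
      Finset.sum_comm (s := Jh) (t := Jk)
        (f := fun j i => if i * h < j * k then
          (-1 : ℚ) ^ (i + j) * (2 * (j : ℚ) - 2 * (h : ℚ) + 1) * (2 * (i : ℚ) - 1) else 0),
      ← Finset.sum_add_distrib]
    refine Finset.sum_congr rfl fun b _ => ?_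
    rw [← Finset.sum_add_distrib]
    refine Finset.sum_congr rfl fun a _ => ?_
    simp only [hF]
    rcases lt_trichotomy (a * k) (b * h) with hc | hc | hc
    · rw [if_pos hc, if_pos hc, if_neg (by omega)]
      ring
    · rw [if_neg (by omega), if_neg (by omega), if_neg (by omega), if_neg (by omega)]
      ring
    · rw [if_neg (by omega), if_pos hc, if_neg (by omega), if_pos hc]
      rw [add_comm b a]
      ring
  rw [hsplit, ← E1, ← E2] at hsum0
  linarith
end

section
/- Let h and k be coprime positive integers with h + k odd. Then B₁(h,k) = (1-h)·(4·s(h,2k) + 4·s(2h,k) - 10·s(h,k)). -/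
/-- The Dedekind sum `s(h,k) = Σ_{j=1}^{k-1} ((hj/k))·((j/k))`. -/
noncomputable def dedekindS (h k : ℤ) : ℚ :=
  ∑ j ∈ Finset.Icc (1 : ℤ) (k - 1),
    saw (((h * j : ℤ) : ℚ) / (k : ℚ)) * saw ((j : ℚ) / (k : ℚ))


namespace Aux7
open Finset

lemma fl (a b : ℤ) (hb : 0 < b) : ⌊(a:ℚ)/(b:ℚ)⌋ = a / b := by
  obtain ⟨n, rfl⟩ : ∃ n : ℕ, b = (n:ℤ) := ⟨b.toNat, (Int.toNat_of_nonneg hb.le).symm⟩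
  rw [show (((n:ℤ)):ℚ) = ((n:ℕ):ℚ) by push_cast; ring]
  exact Rat.floor_intCast_div_natCast a n

lemma not_dvd (b x : ℤ) (hx1 : 1 ≤ x) (hx2 : x ≤ b - 1) : ¬ b ∣ x := by
  intro hd
  have := Int.le_of_dvd (by omega) hd
  omega

lemma saw_intCast (n : ℤ) : saw ((n:ℚ)) = 0 := by
  rw [saw, if_pos]
  rw [Int.floor_intCast]

lemma saw_eval (a b : ℤ) (hb : 0 < b) (h : ¬ b ∣ a) :
    saw ((a:ℚ)/(b:ℚ)) = (a:ℚ)/(b:ℚ) - ((a / b : ℤ):ℚ) - 1/2 := by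
  rw [saw, fl a b hb, if_neg]
  intro hEq
  apply h
  have hb' : (b:ℚ) ≠ 0 := by positivity
  rw [div_eq_iff hb'] at hEq
  have h5 : a = (a/b) * b := by exact_mod_cast hEq
  exact ⟨a/b, by linarith⟩

lemma saw_dvd (a b : ℤ) (h : b ∣ a) : saw ((a:ℚ)/(b:ℚ)) = 0 := by
  by_cases hb : b = 0
  · subst hb; norm_num [saw]
  · obtain ⟨c, rfl⟩ := h
    have hb' : (b:ℚ) ≠ 0 := by exact_mod_cast hb
    rw [show ((b*c:ℤ):ℚ)/(b:ℚ) = ((c:ℤ):ℚ) by push_cast; field_simp]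
    exact saw_intCast c

lemma saw_add_int (x : ℚ) (n : ℤ) : saw (x + n) = saw x := by
  have hfl : (((⌊x⌋ + n : ℤ)):ℚ) = (⌊x⌋:ℚ) + (n:ℚ) := by push_cast; ring
  unfold saw
  rw [Int.floor_add_intCast, hfl]
  by_cases hx : x = (⌊x⌋:ℚ)
  · rw [if_pos (by rw [← hx]), if_pos hx]
  · rw [if_neg (fun hc => hx (by linarith)), if_neg hx]; ring

lemma saw_neg (x : ℚ) : saw (-x) = - saw x := by
  by_cases hx : x = (⌊x⌋:ℚ)
  · rw [hx, show -(⌊x⌋:ℚ) = ((-⌊x⌋ : ℤ):ℚ) by push_cast; ring, saw_intCast, saw_intCast]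
    ring
  · have h1 : (⌊x⌋:ℚ) < x := lt_of_le_of_ne (Int.floor_le x) (fun hc => hx hc.symm)
    have h2 : x < (⌊x⌋:ℚ) + 1 := Int.lt_floor_add_one x
    have hfl : ⌊-x⌋ = -⌊x⌋ - 1 := by
      rw [Int.floor_eq_iff]
      constructor
      · push_cast; linarith
      · push_cast; linarith
    unfold saw
    rw [hfl, if_neg, if_neg hx]
    · push_cast; ring
    · push_cast; intro hc; linarith

lemma saw_half (x : ℚ) : saw x + saw (x + 1/2) = saw (2*x) := by
  set n := ⌊x⌋ with hn
  have h1 : (n:ℚ) ≤ x := Int.floor_le x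
  have h2 : x < (n:ℚ) + 1 := Int.lt_floor_add_one x
  rcases eq_or_lt_of_le h1 with he | hl
  · -- x = n
    have hx : x = (n:ℚ) := he.symm
    rw [hx]
    rw [show (n:ℚ) + 1/2 = ((n:ℤ):ℚ) + 1/2 by norm_num]
    rw [show ((n:ℤ):ℚ) + 1/2 = 1/2 + ((n:ℤ):ℚ) by ring, saw_add_int, saw_intCast]
    rw [show 2*((n:ℤ):ℚ) = ((2*n:ℤ):ℚ) by push_cast; ring, saw_intCast]
    have : saw (1/2 : ℚ) = 0 := by norm_num [saw]
    rw [this]; ring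
  · rcases lt_trichotomy x ((n:ℚ) + 1/2) with hc | hc | hc
    · -- n < x < n + 1/2
      have f1 : ⌊x + 1/2⌋ = n := by rw [Int.floor_eq_iff] <;> constructor <;> push_cast <;> linarith
      have f2 : ⌊2*x⌋ = 2*n := by rw [Int.floor_eq_iff] <;> constructor <;> push_cast <;> linarith
      unfold saw
      rw [f1, f2, if_neg (by intro h; rw [h] at hl; simp [hn] at hl),
        if_neg (by push_cast; intro h; linarith), if_neg (by push_cast; intro h; linarith)]
      push_cast; ring
    · -- x = n + 1/2
      have f0 : saw x = 0 := by
        unfold saw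
        rw [if_neg (by intro h; rw [h] at hl; simp [hn] at hl)]
        rw [← hn, hc]; push_cast; ring
      have f1 : x + 1/2 = ((n+1 : ℤ):ℚ) := by rw [hc]; push_cast; ring
      have f2 : 2*x = ((2*n+1 : ℤ):ℚ) := by rw [hc]; push_cast; ring
      rw [f0, f1, f2, saw_intCast, saw_intCast]; ring
    · -- n + 1/2 < x < n+1
      have f1 : ⌊x + 1/2⌋ = n + 1 := by rw [Int.floor_eq_iff] <;> constructor <;> push_cast <;> linarith
      have f2 : ⌊2*x⌋ = 2*n + 1 := by rw [Int.floor_eq_iff] <;> constructor <;> push_cast <;> linarith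
      unfold saw
      rw [f1, f2, if_neg (by intro h; rw [h] at hl; simp [hn] at hl),
        if_neg (by push_cast; intro h; linarith), if_neg (by push_cast; intro h; linarith)]
      push_cast; ring

lemma neg_ediv (a b : ℤ) (hb : 0 < b) (h : ¬ b ∣ a) : (-a) / b = -(a/b) - 1 := by
  have h1 := Int.emod_add_mul_ediv a b
  have h2 : 0 ≤ a % b := Int.emod_nonneg a (by omega)
  have h3 : a % b < b := Int.emod_lt_of_pos a hb
  have h4 : a % b ≠ 0 := fun hc => h (Int.dvd_of_emod_eq_zero hc)
  have key : b - a % b + b * (-(a / b) - 1) = -a ∧ 0 ≤ b - a % b ∧ b - a % b < b := by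
    refine ⟨?_, by omega, by omega⟩
    have e : b - a % b + b * (-(a / b) - 1) = -(a % b + b * (a/b)) := by ring
    rw [e, h1]
  exact ((Int.ediv_emod_unique hb).mpr key).1


lemma sum_Icc_succ (F : ℤ → ℚ) (n : ℤ) (hn : 0 ≤ n) :
    ∑ j ∈ Icc (1:ℤ) (n+1), F j = (∑ j ∈ Icc (1:ℤ) n, F j) + F (n+1) := by
  rw [show Icc (1:ℤ) (n+1) = insert (n+1) (Icc 1 n) by ext a; simp only [Finset.mem_Icc, Finset.mem_insert]; omega]
  rw [Finset.sum_insert (by simp only [Finset.mem_Icc]; omega)]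
  ring

lemma gauss1 (n : ℤ) (hn : 0 ≤ n) : ∑ j ∈ Icc (1:ℤ) n, (j:ℚ) = (n:ℚ)*(n+1)/2 := by
  refine Int.le_induction (motive := fun n _ => ∑ j ∈ Icc (1:ℤ) n, (j:ℚ) = (n:ℚ)*(n+1)/2) ?_ ?_ n hn
  · simp
  · intro n hn ih
    rw [sum_Icc_succ _ n hn, ih]
    push_cast; ring

lemma gauss2 (n : ℤ) (hn : 0 ≤ n) : ∑ j ∈ Icc (1:ℤ) n, (j:ℚ)^2 = (n:ℚ)*(n+1)*(2*n+1)/6 := by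
  refine Int.le_induction (motive := fun n _ => ∑ j ∈ Icc (1:ℤ) n, (j:ℚ)^2 = (n:ℚ)*(n+1)*(2*n+1)/6) ?_ ?_ n hn
  · simp
  · intro n hn ih
    rw [sum_Icc_succ _ n hn, ih]
    push_cast; ring

lemma sum_const_Icc (lo hi : ℤ) (h : lo ≤ hi + 1) : ∑ _j ∈ Icc lo hi, (1:ℚ) = ((hi + 1 - lo : ℤ) : ℚ) := by
  rw [Finset.sum_const, Int.card_Icc, nsmul_eq_mul, mul_one]
  exact_mod_cast congrArg (fun z : ℤ => (z:ℚ)) (Int.toNat_of_nonneg (by omega))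

lemma sum_reflect (F : ℤ → ℚ) (n : ℤ) :
    ∑ j ∈ Icc (1:ℤ) n, F j = ∑ j ∈ Icc (1:ℤ) n, F (n+1-j) := by
  refine Finset.sum_nbij' (fun j => n+1-j) (fun j => n+1-j) ?_ ?_ ?_ ?_ ?_ <;>
    intro a ha <;> simp only [Finset.mem_Icc] at ha ⊢
  · omega
  · omega
  · omega
  · omega
  · exact congrArg F (by omega)

lemma filter_le_eq (a c n : ℤ) (ha : 0 < a) (hf : c/a ≤ n) :
    filter (fun m => a*m ≤ c) (Icc (1:ℤ) n) = Icc 1 (c/a) := by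
  ext m
  simp only [Finset.mem_filter, Finset.mem_Icc]
  constructor
  · rintro ⟨⟨h1, h2⟩, h3⟩
    exact ⟨h1, (Int.le_ediv_iff_mul_le ha).mpr (by linarith [mul_comm a m])⟩
  · rintro ⟨h1, h2⟩
    have := (Int.le_ediv_iff_mul_le ha).mp h2
    exact ⟨⟨h1, le_trans h2 hf⟩, by linarith [mul_comm m a]⟩

lemma filter_ge_eq (a c n : ℤ) (ha : 0 < a) (hc : 0 < c) (hnd : ¬ a ∣ c) :
    filter (fun j => c ≤ a*j) (Icc (1:ℤ) n) = Icc (c/a + 1) n := by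
  have h0 : 0 ≤ c/a := Int.ediv_nonneg hc.le ha.le
  ext j
  simp only [Finset.mem_filter, Finset.mem_Icc]
  constructor
  · rintro ⟨⟨h1, h2⟩, h3⟩
    have hne : c ≠ a*j := fun hc' => hnd ⟨j, hc'⟩
    have : c/a < j := (Int.ediv_lt_iff_lt_mul ha).mpr (by rw [mul_comm]; omega)
    exact ⟨by omega, h2⟩
  · rintro ⟨h1, h2⟩
    have : c < j*a := (Int.ediv_lt_iff_lt_mul ha).mp (by omega)
    exact ⟨⟨by omega, h2⟩, by rw [mul_comm] at this; omega⟩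

lemma ediv_ediv (x m n : ℤ) (hx : 0 ≤ x) (hm : 0 ≤ m) (hn : 0 ≤ n) :
    x / m / n = x / (m*n) := by
  obtain ⟨X, rfl⟩ := Int.eq_ofNat_of_zero_le hx
  obtain ⟨M, rfl⟩ := Int.eq_ofNat_of_zero_le hm
  obtain ⟨N, rfl⟩ := Int.eq_ofNat_of_zero_le hn
  rw [show ((M:ℤ))*(N:ℤ) = ((M*N : ℕ) : ℤ) by push_cast; ring]
  rw [← Int.natCast_ediv, ← Int.natCast_ediv, ← Int.natCast_ediv, Nat.div_div_eq_div_mul]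

lemma zpow_neg_one_emod2 (e : ℤ) : (-1:ℚ)^e = 1 - 2*((e % 2 : ℤ):ℚ) := by
  rcases Int.even_or_odd e with he | he
  · rw [Even.neg_one_zpow he, Int.even_iff.mp he]; norm_num
  · rw [Odd.neg_one_zpow he, Int.odd_iff.mp he]; norm_num

lemma zpow_neg_one_congr {e₁ e₂ : ℤ} (h : e₁ % 2 = e₂ % 2) : (-1:ℚ)^e₁ = (-1:ℚ)^e₂ := by
  rw [zpow_neg_one_emod2, zpow_neg_one_emod2, h]

lemma zpow_neg_one_flip {e₁ e₂ : ℤ} (h : e₁ % 2 + e₂ % 2 = 1) : (-1:ℚ)^e₁ = -(-1:ℚ)^e₂ := by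
  rw [zpow_neg_one_emod2, zpow_neg_one_emod2]
  have h1 : e₁ % 2 = 0 ∨ e₁ % 2 = 1 := by omega
  rcases h1 with h1 | h1 <;> rw [h1] <;> rw [show e₂ % 2 = 1 - e₁ % 2 by omega] <;>
    rw [h1] <;> norm_num

noncomputable def Tq (a b : ℤ) : ℚ := ∑ j ∈ Icc (1:ℤ) (b-1), (j:ℚ) * ((a*j/b : ℤ):ℚ)
noncomputable def Qq (a b : ℤ) : ℚ := ∑ j ∈ Icc (1:ℤ) (b-1), ((a*j/b : ℤ):ℚ)^2

lemma not_dvd_mul (a b j : ℤ) (hco : IsCoprime a b) (h1 : 1 ≤ j) (h2 : j ≤ b - 1) :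
    ¬ b ∣ a * j := fun hd => not_dvd b j h1 h2 ((hco.symm).dvd_of_dvd_mul_left hd)

lemma ediv_bound (a b j : ℤ) (ha : 0 < a) (hb : 0 < b) (h1 : 1 ≤ j) (h2 : j ≤ b - 1) :
    0 ≤ a*j/b ∧ a*j/b ≤ a - 1 := by
  constructor
  · exact Int.ediv_nonneg (by positivity) hb.le
  · have : a*j/b < a := (Int.ediv_lt_iff_lt_mul hb).mpr (by nlinarith)
    omega

lemma cardcast (b : ℤ) (hb : 0 < b) : ((b - 1 + 1 - 1).toNat : ℚ) = (b:ℚ) - 1 := by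
  have h := Int.toNat_of_nonneg (show (0:ℤ) ≤ b-1+1-1 by omega)
  have : (((b-1+1-1).toNat : ℤ) : ℚ) = ((b-1+1-1 : ℤ) : ℚ) := by exact_mod_cast congrArg (fun z : ℤ => (z:ℚ)) h
  push_cast at this ⊢
  linarith

lemma sum_comb (b : ℤ) (hb : 0 < b) (c0 c1 c2 c3 c4 c5 : ℚ) (g : ℤ → ℚ) :
    ∑ j ∈ Icc (1:ℤ) (b-1), (c0*(g j)^2 + c1*(j:ℚ)^2 + c2*((j:ℚ)*g j) + c3*(j:ℚ) + c4*(g j) + c5)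
      = c0*(∑ j ∈ Icc (1:ℤ) (b-1), (g j)^2) + c1*(((b:ℚ)-1)*(b:ℚ)*(2*(b:ℚ)-1)/6)
        + c2*(∑ j ∈ Icc (1:ℤ) (b-1), (j:ℚ)*g j) + c3*(((b:ℚ)-1)*(b:ℚ)/2)
        + c4*(∑ j ∈ Icc (1:ℤ) (b-1), g j) + c5*((b:ℚ)-1) := by
  simp only [Finset.sum_add_distrib]
  rw [← Finset.mul_sum, ← Finset.mul_sum, ← Finset.mul_sum, ← Finset.mul_sum, ← Finset.mul_sum]
  rw [gauss2 (b-1) (by omega), gauss1 (b-1) (by omega)]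
  rw [Finset.sum_const, Int.card_Icc, nsmul_eq_mul, cardcast b hb]
  push_cast
  ring

lemma Fq_eval (a b : ℤ) (ha : 0 < a) (hb : 0 < b) (hco : IsCoprime a b) :
    ∑ j ∈ Icc (1:ℤ) (b-1), ((a*j/b : ℤ):ℚ) = ((a:ℚ)-1)*((b:ℚ)-1)/2 := by
  have refl := sum_reflect (fun j => ((a*j/b : ℤ):ℚ)) (b-1)
  have key : ∀ j ∈ Icc (1:ℤ) (b-1), ((a*(b-1+1-j)/b : ℤ):ℚ) = ((a:ℚ)-1) - ((a*j/b:ℤ):ℚ) := by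
    intro j hj
    simp only [Finset.mem_Icc] at hj
    have hnd := not_dvd_mul a b j hco hj.1 hj.2
    have e1 : a*(b-1+1-j) = -(a*j) + a*b := by ring
    have e2 : (-(a*j) + a*b)/b = (-(a*j))/b + a := Int.add_mul_ediv_right _ _ (by omega)
    have e3 : (-(a*j))/b = -(a*j/b) - 1 := neg_ediv _ _ hb hnd
    rw [e1, e2, e3]
    push_cast; ring
  rw [Finset.sum_congr rfl key, Finset.sum_sub_distrib, Finset.sum_const, Int.card_Icc,
    nsmul_eq_mul, cardcast b hb] at refl
  linarith

lemma perm_sq (a b : ℤ) (hb : 0 < b) (hco : IsCoprime a b) :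
    ∑ j ∈ Icc (1:ℤ) (b-1), (saw (((a*j:ℤ):ℚ)/(b:ℚ)))^2
      = ∑ j ∈ Icc (1:ℤ) (b-1), (saw ((j:ℚ)/(b:ℚ)))^2 := by
  have hab : IsCoprime a b := hco
  obtain ⟨u, v, huv⟩ := hco
  have hb0 : b ≠ 0 := by omega
  have hbpos : 0 < b := by omega
  have hucop : IsCoprime u b := ⟨a, v, by linarith [mul_comm u a, mul_comm a u]⟩
  have memlem : ∀ (w j : ℤ), IsCoprime w b → 1 ≤ j → j ≤ b - 1 → 1 ≤ (w*j) % b ∧ (w*j) % b ≤ b - 1 := by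
    intro w j hw h1 h2
    have hnd : ¬ b ∣ w * j := not_dvd_mul w b j hw h1 h2
    have h3 : 0 ≤ (w*j) % b := Int.emod_nonneg _ hb0
    have h4 : (w*j) % b < b := Int.emod_lt_of_pos _ hbpos
    have h5 : (w*j) % b ≠ 0 := fun hc => hnd (Int.dvd_of_emod_eq_zero hc)
    omega
  have emod_inv : ∀ (w w' j : ℤ), (w * w') % b = 1 % b → 1 ≤ j → j ≤ b - 1 →
      (w' * ((w*j) % b)) % b = j := by
    intro w w' j hww h1 h2
    have e1 : (w' * ((w*j) % b)) % b = (w' * (w*j)) % b := by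
      rw [Int.mul_emod, Int.emod_emod_of_dvd _ dvd_rfl, ← Int.mul_emod]
    have e2 : w' * (w*j) = (w*w') * j := by ring
    have e3 : ((w*w') * j) % b = (1 * j) % b := by
      conv_lhs => rw [Int.mul_emod, hww, ← Int.mul_emod]
    rw [e1, e2, e3, one_mul, Int.emod_eq_of_lt (by omega) (by omega)]
  have hau : (a * u) % b = 1 % b := by
    rw [show a*u = 1 + b*(-v) by linarith [mul_comm u a]]
    exact Int.add_mul_emod_self_left 1 b (-v)
  have hua : (u * a) % b = 1 % b := by rw [mul_comm]; exact hau
  have hval : ∀ j ∈ Icc (1:ℤ) (b-1),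
      (saw (((a*j:ℤ):ℚ)/(b:ℚ)))^2 = (saw ((((a*j)%b : ℤ):ℚ)/(b:ℚ)))^2 := by
    intro j hj
    have hzz : (a*j : ℤ) = (a*j)%b + (a*j/b)*b := by
      have := Int.emod_add_mul_ediv (a*j) b; linarith
    have hbq : (b:ℚ) ≠ 0 := by exact_mod_cast hb0
    have hz : ((a*j : ℤ):ℚ)/(b:ℚ) = (((a*j)%b : ℤ):ℚ)/(b:ℚ) + ((a*j/b : ℤ):ℚ) := by
      field_simp
      have hzz' : a*j = a*j%b + b*(a*j/b) := by linarith
      exact_mod_cast hzz'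
    rw [hz, saw_add_int]
  rw [Finset.sum_congr rfl hval]
  refine Finset.sum_nbij' (fun j => (a*j) % b) (fun t => (u*t) % b) ?_ ?_ ?_ ?_ ?_
  · intro j hj
    simp only [Finset.mem_Icc] at hj ⊢
    exact memlem a j hab hj.1 hj.2
  · intro t ht
    simp only [Finset.mem_Icc] at ht ⊢
    exact memlem u t hucop ht.1 ht.2
  · intro j hj
    simp only [Finset.mem_Icc] at hj
    exact emod_inv a u j hau hj.1 hj.2
  · intro t ht
    simp only [Finset.mem_Icc] at ht
    exact emod_inv u a t hua ht.1 ht.2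
  · intro j hj
    rfl

lemma E1' (a b : ℤ) (ha : 0 < a) (hb : 0 < b) (hco : IsCoprime a b) :
    12*(b:ℚ)*dedekindS a b
      = 2*(a:ℚ)*((b:ℚ)-1)*(2*(b:ℚ)-1) - 12*Tq a b - 3*(b:ℚ)*((b:ℚ)-1) := by
  have hbq : (b:ℚ) ≠ 0 := by positivity
  have term : ∀ j ∈ Icc (1:ℤ) (b-1),
      12*(b:ℚ)^2*(saw (((a*j:ℤ):ℚ)/(b:ℚ)) * saw ((j:ℚ)/(b:ℚ)))
        = (0:ℚ)*(((a*j/b : ℤ):ℚ))^2 + (12*(a:ℚ))*(j:ℚ)^2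
          + (-12*(b:ℚ))*((j:ℚ)*((a*j/b : ℤ):ℚ)) + (-6*(b:ℚ)*((a:ℚ)+1))*(j:ℚ)
          + (6*(b:ℚ)^2)*((a*j/b : ℤ):ℚ) + 3*(b:ℚ)^2 := by
    intro j hj
    simp only [Finset.mem_Icc] at hj
    have h1 := saw_eval (a*j) b hb (not_dvd_mul a b j hco hj.1 hj.2)
    have h2 := saw_eval j b hb (not_dvd b j hj.1 hj.2)
    have h3 : j / b = 0 := Int.ediv_eq_zero_of_lt (by omega) (by omega)
    rw [h3] at h2
    rw [h1, h2]
    push_cast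
    field_simp
    ring
  have expand : 12*(b:ℚ)^2*dedekindS a b
      = (0:ℚ)*(∑ j ∈ Icc (1:ℤ) (b-1), (((a*j/b : ℤ):ℚ))^2)
        + (12*(a:ℚ))*(((b:ℚ)-1)*(b:ℚ)*(2*(b:ℚ)-1)/6)
        + (-12*(b:ℚ))*(∑ j ∈ Icc (1:ℤ) (b-1), (j:ℚ)*((a*j/b : ℤ):ℚ))
        + (-6*(b:ℚ)*((a:ℚ)+1))*(((b:ℚ)-1)*(b:ℚ)/2)
        + (6*(b:ℚ)^2)*(∑ j ∈ Icc (1:ℤ) (b-1), ((a*j/b : ℤ):ℚ)) + (3*(b:ℚ)^2)*((b:ℚ)-1) := by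
    rw [dedekindS, Finset.mul_sum, Finset.sum_congr rfl term,
      sum_comb b hb 0 (12*(a:ℚ)) (-12*(b:ℚ)) (-6*(b:ℚ)*((a:ℚ)+1)) (6*(b:ℚ)^2) (3*(b:ℚ)^2)
        (fun j => ((a*j/b : ℤ):ℚ))]
  rw [Fq_eval a b ha hb hco] at expand
  have hT : ∑ j ∈ Icc (1:ℤ) (b-1), (j:ℚ)*((a*j/b : ℤ):ℚ) = Tq a b := rfl
  rw [hT] at expand
  apply mul_left_cancel₀ hbq
  linear_combination expand

lemma E2' (a b : ℤ) (ha : 0 < a) (hb : 0 < b) (hco : IsCoprime a b) :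
    2*(a:ℚ)^2*((b:ℚ)-1)*(2*(b:ℚ)-1) + 12*(b:ℚ)*Qq a b + 3*(b:ℚ)*((b:ℚ)-1)
      - 24*(a:ℚ)*Tq a b - 6*(a:ℚ)*(b:ℚ)*((b:ℚ)-1) + 6*(b:ℚ)*((a:ℚ)-1)*((b:ℚ)-1)
      = ((b:ℚ)-1)*((b:ℚ)-2) := by
  have hbq : (b:ℚ) ≠ 0 := by positivity
  have base := perm_sq a b hb hco
  have lterm : ∀ j ∈ Icc (1:ℤ) (b-1),
      12*(b:ℚ)^2*(saw (((a*j:ℤ):ℚ)/(b:ℚ)))^2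
        = (12*(b:ℚ)^2)*(((a*j/b : ℤ):ℚ))^2 + (12*(a:ℚ)^2)*(j:ℚ)^2
          + (-24*(a:ℚ)*(b:ℚ))*((j:ℚ)*((a*j/b : ℤ):ℚ)) + (-12*(a:ℚ)*(b:ℚ))*(j:ℚ)
          + (12*(b:ℚ)^2)*((a*j/b : ℤ):ℚ) + 3*(b:ℚ)^2 := by
    intro j hj
    simp only [Finset.mem_Icc] at hj
    have h1 := saw_eval (a*j) b hb (not_dvd_mul a b j hco hj.1 hj.2)
    rw [h1]
    push_cast
    field_simp
    ring
  have rterm : ∀ j ∈ Icc (1:ℤ) (b-1),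
      12*(b:ℚ)^2*(saw ((j:ℚ)/(b:ℚ)))^2
        = (0:ℚ)*(((a*j/b : ℤ):ℚ))^2 + (12:ℚ)*(j:ℚ)^2
          + (0:ℚ)*((j:ℚ)*((a*j/b : ℤ):ℚ)) + (-12*(b:ℚ))*(j:ℚ)
          + (0:ℚ)*((a*j/b : ℤ):ℚ) + 3*(b:ℚ)^2 := by
    intro j hj
    simp only [Finset.mem_Icc] at hj
    have h2 := saw_eval j b hb (not_dvd b j hj.1 hj.2)
    have h3 : j / b = 0 := Int.ediv_eq_zero_of_lt (by omega) (by omega)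
    rw [h3] at h2
    rw [h2]
    push_cast
    field_simp
    ring
  have lhs_eq : 12*(b:ℚ)^2 * (∑ j ∈ Icc (1:ℤ) (b-1), (saw (((a*j:ℤ):ℚ)/(b:ℚ)))^2)
      = (12*(b:ℚ)^2)*(∑ j ∈ Icc (1:ℤ) (b-1), (((a*j/b : ℤ):ℚ))^2)
        + (12*(a:ℚ)^2)*(((b:ℚ)-1)*(b:ℚ)*(2*(b:ℚ)-1)/6)
        + (-24*(a:ℚ)*(b:ℚ))*(∑ j ∈ Icc (1:ℤ) (b-1), (j:ℚ)*((a*j/b : ℤ):ℚ))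
        + (-12*(a:ℚ)*(b:ℚ))*(((b:ℚ)-1)*(b:ℚ)/2)
        + (12*(b:ℚ)^2)*(∑ j ∈ Icc (1:ℤ) (b-1), ((a*j/b : ℤ):ℚ)) + (3*(b:ℚ)^2)*((b:ℚ)-1) := by
    rw [Finset.mul_sum, Finset.sum_congr rfl lterm,
      sum_comb b hb (12*(b:ℚ)^2) (12*(a:ℚ)^2) (-24*(a:ℚ)*(b:ℚ)) (-12*(a:ℚ)*(b:ℚ)) (12*(b:ℚ)^2) (3*(b:ℚ)^2)
        (fun j => ((a*j/b : ℤ):ℚ))]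
  have rhs_eq : 12*(b:ℚ)^2 * (∑ j ∈ Icc (1:ℤ) (b-1), (saw ((j:ℚ)/(b:ℚ)))^2)
      = (0:ℚ)*(∑ j ∈ Icc (1:ℤ) (b-1), (((a*j/b : ℤ):ℚ))^2)
        + (12:ℚ)*(((b:ℚ)-1)*(b:ℚ)*(2*(b:ℚ)-1)/6)
        + (0:ℚ)*(∑ j ∈ Icc (1:ℤ) (b-1), (j:ℚ)*((a*j/b : ℤ):ℚ))
        + (-12*(b:ℚ))*(((b:ℚ)-1)*(b:ℚ)/2)
        + (0:ℚ)*(∑ j ∈ Icc (1:ℤ) (b-1), ((a*j/b : ℤ):ℚ)) + (3*(b:ℚ)^2)*((b:ℚ)-1) := by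
    rw [Finset.mul_sum, Finset.sum_congr rfl rterm,
      sum_comb b hb 0 (12:ℚ) 0 (-12*(b:ℚ)) 0 (3*(b:ℚ)^2) (fun j => ((a*j/b : ℤ):ℚ))]
  have main := rhs_eq
  rw [← base] at main
  rw [lhs_eq] at main
  rw [Fq_eval a b ha hb hco] at main
  have hT : ∑ j ∈ Icc (1:ℤ) (b-1), (j:ℚ)*((a*j/b : ℤ):ℚ) = Tq a b := rfl
  have hQ : ∑ j ∈ Icc (1:ℤ) (b-1), (((a*j/b : ℤ):ℚ))^2 = Qq a b := rfl
  rw [hT, hQ] at main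
  apply mul_left_cancel₀ hbq
  linear_combination main

lemma I3' (a b : ℤ) (ha : 0 < a) (hb : 0 < b) (hco : IsCoprime a b) :
    2*Qq a b + ((a:ℚ)-1)*((b:ℚ)-1) = 2*(a:ℚ)*((a:ℚ)-1)*((b:ℚ)-1) - 4*Tq b a := by
  have step1 : ∀ j ∈ Icc (1:ℤ) (b-1),
      ((a*j/b:ℤ):ℚ)^2 + ((a*j/b:ℤ):ℚ)
        = 2 * ∑ m ∈ Icc (1:ℤ) (a-1), (if b*m ≤ a*j then (m:ℚ) else 0) := by
    intro j hj
    simp only [Finset.mem_Icc] at hj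
    have hbd := ediv_bound a b j ha hb hj.1 hj.2
    rw [← Finset.sum_filter, filter_le_eq b (a*j) (a-1) hb (by omega),
      gauss1 (a*j/b) hbd.1]
    push_cast; ring
  have main : Qq a b + (∑ j ∈ Icc (1:ℤ) (b-1), ((a*j/b:ℤ):ℚ))
      = 2 * ∑ j ∈ Icc (1:ℤ) (b-1), ∑ m ∈ Icc (1:ℤ) (a-1), (if b*m ≤ a*j then (m:ℚ) else 0) := by
    rw [Qq, ← Finset.sum_add_distrib, Finset.mul_sum]
    exact Finset.sum_congr rfl step1
  rw [Finset.sum_comm] at main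
  have inner : ∀ m ∈ Icc (1:ℤ) (a-1),
      ∑ j ∈ Icc (1:ℤ) (b-1), (if b*m ≤ a*j then (m:ℚ) else 0)
        = ((b:ℚ)-1)*(m:ℚ) - (m:ℚ)*((b*m/a : ℤ):ℚ) := by
    intro m hm
    simp only [Finset.mem_Icc] at hm
    have hnd : ¬ a ∣ b*m := by
      intro hd
      have h6 : a ∣ m := hco.dvd_of_dvd_mul_left hd
      have := Int.le_of_dvd (by omega) h6
      omega
    have hq : b*m/a ≤ b - 1 := by
      have : b*m/a < b := (Int.ediv_lt_iff_lt_mul ha).mpr (by nlinarith)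
      omega
    have hq0 : 0 ≤ b*m/a := Int.ediv_nonneg (mul_nonneg hb.le (by omega)) ha.le
    rw [← Finset.sum_filter, filter_ge_eq a (b*m) (b-1) ha (mul_pos hb (by omega)) hnd,
      Finset.sum_const, Int.card_Icc, nsmul_eq_mul]
    have hcast2 : ((b - 1 + 1 - (b*m/a + 1)).toNat : ℚ) = ((b:ℚ)-1) - ((b*m/a : ℤ):ℚ) := by
      have h := Int.toNat_of_nonneg (show (0:ℤ) ≤ b-1+1-(b*m/a+1) by omega)
      have h2 : (((b-1+1-(b*m/a+1)).toNat : ℤ) : ℚ) = ((b-1+1-(b*m/a+1) : ℤ) : ℚ) :=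
        congrArg (fun z : ℤ => (z:ℚ)) h
      push_cast at h2 ⊢
      linarith
    rw [hcast2]
    ring
  rw [Finset.sum_congr rfl inner, Finset.sum_sub_distrib, ← Finset.mul_sum,
    gauss1 (a-1) (by omega)] at main
  have hT : ∑ m ∈ Icc (1:ℤ) (a-1), (m:ℚ)*((b*m/a : ℤ):ℚ) = Tq b a := rfl
  rw [hT, Fq_eval a b ha hb hco] at main
  push_cast at main
  linarith

lemma dedekind_rec (a b : ℤ) (ha : 0 < a) (hb : 0 < b) (hco : IsCoprime a b) :
    12*(a:ℚ)*(b:ℚ)*(dedekindS a b + dedekindS b a)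
      = (a:ℚ)^2+(b:ℚ)^2+1 - 3*(a:ℚ)*(b:ℚ) := by
  have h1 := E1' a b ha hb hco
  have h2 := E1' b a hb ha hco.symm
  have h3 := E2' a b ha hb hco
  have h4 := I3' a b ha hb hco
  linear_combination (a:ℚ)*h1 + (b:ℚ)*h2 + (1/2)*h3 - 3*(b:ℚ)*h4

noncomputable def Ssum (h k : ℤ) : ℚ := ∑ j ∈ Icc (1:ℤ) (k-1), (-1:ℚ)^(j + h*j/k)
noncomputable def Nq (h k : ℤ) : ℚ := ∑ j ∈ Icc (1:ℤ) (k-1), (((h+k)*j/(2*k) : ℤ):ℚ)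
noncomputable def Dfun (h k : ℤ) : ℚ := 4*dedekindS h (2*k) + 4*dedekindS (2*h) k - 10*dedekindS h k

lemma B1_eq (h k : ℤ) (hk : 0 < k) :
    B1 h k = ∑ j ∈ Icc (1:ℤ) (k-1), (-1:ℚ)^(j + h*j/k) * ((h*j/k : ℤ):ℚ) := by
  unfold B1
  refine Finset.sum_congr rfl ?_
  intro j _
  rw [fl (h*j) k hk]

lemma B1_Ssum (h k : ℤ) (hh : 0 < h) (hk : 0 < k) (hco : IsCoprime h k) (hodd : Odd (h+k)) :
    2 * B1 h k = ((h:ℚ)-1) * Ssum h k := by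
  rw [B1_eq h k hk]
  have refl := sum_reflect (fun j => (-1:ℚ)^(j + h*j/k) * ((h*j/k : ℤ):ℚ)) (k-1)
  have hoddi : (h+k) % 2 = 1 := Int.odd_iff.mp hodd
  have key : ∀ j ∈ Icc (1:ℤ) (k-1),
      (-1:ℚ)^((k-1+1-j) + h*(k-1+1-j)/k) * ((h*(k-1+1-j)/k : ℤ):ℚ)
        = (-1:ℚ)^(j + h*j/k) * (((h:ℚ)-1) - ((h*j/k : ℤ):ℚ)) := by
    intro j hj
    simp only [Finset.mem_Icc] at hj
    have hnd := not_dvd_mul h k j hco hj.1 hj.2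
    have e1 : h*(k-1+1-j) = -(h*j) + h*k := by ring
    have e2 : (-(h*j) + h*k)/k = (-(h*j))/k + h := Int.add_mul_ediv_right _ _ (by omega)
    have e3 : (-(h*j))/k = -(h*j/k) - 1 := neg_ediv _ _ hk hnd
    have efl : h*(k-1+1-j)/k = h - 1 - h*j/k := by rw [e1, e2, e3]; ring
    rw [efl]
    have hpar : ((k-1+1-j) + (h - 1 - h*j/k)) % 2 = (j + h*j/k) % 2 := by omega
    rw [zpow_neg_one_congr hpar]
    push_cast; ring
  rw [Finset.sum_congr rfl key] at refl
  have expand : ∑ j ∈ Icc (1:ℤ) (k-1), (-1:ℚ)^(j + h*j/k) * (((h:ℚ)-1) - ((h*j/k : ℤ):ℚ))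
      = ((h:ℚ)-1) * Ssum h k - ∑ j ∈ Icc (1:ℤ) (k-1), (-1:ℚ)^(j + h*j/k) * ((h*j/k : ℤ):ℚ) := by
    rw [Ssum, Finset.mul_sum, ← Finset.sum_sub_distrib]
    refine Finset.sum_congr rfl ?_
    intro j _
    ring
  rw [expand] at refl
  linarith

lemma Ssum_eval (h k : ℤ) (hh : 0 < h) (hk : 0 < k) (hco : IsCoprime h k) :
    Ssum h k = ((k:ℚ)-1)*(2-((h:ℚ)+(k:ℚ))) + 4 * Nq h k := by
  have hHco : IsCoprime (h+k) k := by
    have := hco.add_mul_left_left 1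
    rwa [mul_one] at this
  have term : ∀ j ∈ Icc (1:ℤ) (k-1),
      (-1:ℚ)^(j + h*j/k) = 1 - 2*(((h+k)*j/k : ℤ):ℚ) + 4*(((h+k)*j/(2*k) : ℤ):ℚ) := by
    intro j hj
    simp only [Finset.mem_Icc] at hj
    have e1 : (h+k)*j = h*j + j*k := by ring
    have e2 : (h*j + j*k)/k = h*j/k + j := Int.add_mul_ediv_right _ _ (by omega)
    have eE : j + h*j/k = (h+k)*j/k := by rw [e1, e2]; ring
    have eH : (h+k)*j/k/2 = (h+k)*j/(2*k) := by
      rw [ediv_ediv ((h+k)*j) k 2 (mul_nonneg (by omega) (by omega)) hk.le (by norm_num)]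
      rw [show k*2 = 2*k from by ring]
    have emod : (j + h*j/k) % 2 = (h+k)*j/k - 2*((h+k)*j/(2*k)) := by
      rw [eE, ← eH]
      omega
    rw [zpow_neg_one_emod2, emod]
    push_cast
    ring
  rw [Ssum, Finset.sum_congr rfl term]
  rw [Finset.sum_add_distrib, Finset.sum_sub_distrib, ← Finset.mul_sum, ← Finset.mul_sum]
  rw [Fq_eval (h+k) k (by omega) hk hHco, sum_const_Icc 1 (k-1) (by omega)]
  rw [show Nq h k = ∑ j ∈ Icc (1:ℤ) (k-1), (((h+k)*j/(2*k) : ℤ):ℚ) from rfl]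
  push_cast
  ring

lemma half_eval (x y M : ℤ) (hx : 0 < x) (hy : 0 < y) (hM : x + y = 2*M+1)
    (hnd : ∀ z ∈ Icc (1:ℤ) M, ¬ (x+y) ∣ 2*y*z) :
    Nq x y = (M:ℚ)*((y:ℚ)-1) - ∑ z ∈ Icc (1:ℤ) M, ((2*y*z/(x+y) : ℤ):ℚ) := by
  have hM0 : 0 ≤ M := by omega
  have hH0 : (0:ℤ) < x + y := by omega
  have term : ∀ j ∈ Icc (1:ℤ) (y-1),
      (((x+y)*j/(2*y) : ℤ):ℚ) = ∑ z ∈ Icc (1:ℤ) M, (if 2*y*z ≤ (x+y)*j then (1:ℚ) else 0) := by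
    intro j hj
    simp only [Finset.mem_Icc] at hj
    have hb2 : (0:ℤ) < 2*y := by omega
    have hub : (x+y)*j/(2*y) ≤ M := by
      have : (x+y)*j/(2*y) < M+1 := by
        rw [Int.ediv_lt_iff_lt_mul hb2]
        nlinarith
      omega
    have hlb : 0 ≤ (x+y)*j/(2*y) := Int.ediv_nonneg (mul_nonneg (by omega) (by omega)) (by omega)
    rw [← Finset.sum_filter, filter_le_eq (2*y) ((x+y)*j) M hb2 hub,
      sum_const_Icc 1 ((x+y)*j/(2*y)) (by omega)]
    push_cast
    ring
  rw [show Nq x y = ∑ j ∈ Icc (1:ℤ) (y-1), (((x+y)*j/(2*y) : ℤ):ℚ) from rfl]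
  rw [Finset.sum_congr rfl term, Finset.sum_comm]
  have inner : ∀ z ∈ Icc (1:ℤ) M,
      ∑ j ∈ Icc (1:ℤ) (y-1), (if 2*y*z ≤ (x+y)*j then (1:ℚ) else 0)
        = ((y:ℚ)-1) - ((2*y*z/(x+y) : ℤ):ℚ) := by
    intro z hz
    simp only [Finset.mem_Icc] at hz
    have hndz := hnd z (by simp only [Finset.mem_Icc]; omega)
    have hzq : 2*y*z/(x+y) ≤ y - 1 := by
      have : 2*y*z/(x+y) < y := by
        rw [Int.ediv_lt_iff_lt_mul hH0]
        nlinarith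
      omega
    have hzq0 : 0 ≤ 2*y*z/(x+y) := Int.ediv_nonneg (by nlinarith) hH0.le
    rw [← Finset.sum_filter,
      filter_ge_eq (x+y) (2*y*z) (y-1) hH0 (by nlinarith) hndz,
      sum_const_Icc _ _ (by omega)]
    push_cast
    ring
  have hconst : ∑ _z ∈ Icc (1:ℤ) M, ((y:ℚ)-1) = (M:ℚ)*((y:ℚ)-1) := by
    rw [Finset.sum_const, Int.card_Icc, nsmul_eq_mul, show M+1-1 = M from by omega]
    have hh2 : ((M.toNat:ℤ):ℚ) = (M:ℚ) :=
      congrArg (fun z : ℤ => (z:ℚ)) (Int.toNat_of_nonneg hM0)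
    push_cast at hh2 ⊢
    rw [hh2]
  rw [Finset.sum_congr rfl inner, Finset.sum_sub_distrib, hconst]

lemma N_rec (h k : ℤ) (hh : 0 < h) (hk : 0 < k) (hco : IsCoprime h k) (hodd : Odd (h+k)) :
    Nq h k + Nq k h = (((h:ℚ)+(k:ℚ))-1)*(((h:ℚ)+(k:ℚ))-3)/4 := by
  obtain ⟨M, hM⟩ := hodd
  have hM' : h + k = 2*M+1 := by omega
  have hM0 : 0 ≤ M := by omega
  have hco2H : IsCoprime (h+k) (2:ℤ) := ⟨1, -M, by omega⟩
  have hcox : ∀ (x y : ℤ), IsCoprime x y → x + y = h + k → IsCoprime (h+k) y := by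
    intro x y hxy hsum
    rw [← hsum]
    have h2 := hxy.add_mul_left_left 1
    rw [mul_one] at h2
    exact h2
  have hcop2 : ∀ (x y : ℤ), IsCoprime x y → x + y = h + k →
      ∀ z ∈ Icc (1:ℤ) M, ¬ (x+y) ∣ 2*y*z := by
    intro x y hxy hsum z hz
    simp only [Finset.mem_Icc] at hz
    intro hdvd
    have hco2y : IsCoprime (h+k) (2*y) := hco2H.mul_right (hcox x y hxy hsum)
    rw [hsum] at hdvd
    have hdz : (h+k) ∣ z := hco2y.dvd_of_dvd_mul_left
      (by rwa [show 2*y*z = (2*y)*z by ring] at hdvd)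
    have := Int.le_of_dvd (by omega) hdz
    omega
  have e1 := half_eval h k M hh hk hM' (fun z hz => hcop2 h k hco rfl z hz)
  have e2 := half_eval k h M hk hh (by omega) (fun z hz => hcop2 k h hco.symm (add_comm k h) z hz)
  rw [show k + h = h + k from by ring] at e2
  have pointwise : ∀ z ∈ Icc (1:ℤ) M,
      ((2*k*z/(h+k) : ℤ):ℚ) + ((2*h*z/(h+k) : ℤ):ℚ) = 2*(z:ℚ) - 1 := by
    intro z hz
    have hH0 : (0:ℤ) < h + k := by omega
    have hnd : ¬ (h+k) ∣ 2*k*z := hcop2 h k hco rfl z hz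
    have e3 : 2*h*z = -(2*k*z) + 2*z*(h+k) := by ring
    have e4 : (-(2*k*z) + 2*z*(h+k))/(h+k) = (-(2*k*z))/(h+k) + 2*z :=
      Int.add_mul_ediv_right _ _ (by omega)
    have e5 : (-(2*k*z))/(h+k) = -(2*k*z/(h+k)) - 1 := neg_ediv _ _ hH0 hnd
    rw [e3, e4, e5]
    push_cast
    ring
  have sum_pt : (∑ z ∈ Icc (1:ℤ) M, ((2*k*z/(h+k) : ℤ):ℚ))
        + (∑ z ∈ Icc (1:ℤ) M, ((2*h*z/(h+k) : ℤ):ℚ))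
      = 2*((M:ℚ)*((M:ℚ)+1)/2) - (M:ℚ) := by
    rw [← Finset.sum_add_distrib, Finset.sum_congr rfl pointwise, Finset.sum_sub_distrib,
      ← Finset.mul_sum, gauss1 M hM0, sum_const_Icc 1 M (by omega)]
    push_cast
    ring
  have hMq : (h:ℚ) + (k:ℚ) = 2*(M:ℚ) + 1 := by exact_mod_cast congrArg (fun z : ℤ => (z:ℚ)) hM'
  rw [e1, e2]
  linear_combination (-1 : ℚ)*sum_pt + ((-((h:ℚ)+(k:ℚ)) + 2*(M:ℚ)+3)/4) * hMq

lemma hardy_rec (h k : ℤ) (hh : 0 < h) (hk : 0 < k) (hco : IsCoprime h k) (hodd : Odd (h+k)) :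
    Ssum h k + Ssum k h = -1 := by
  rw [Ssum_eval h k hh hk hco, Ssum_eval k h hk hh hco.symm]
  linear_combination 4*(N_rec h k hh hk hco hodd)

lemma sum_split (m : ℤ) (hm : 0 < m) (F : ℤ → ℚ) :
    ∑ j ∈ Icc (1:ℤ) (2*m-1), F j
      = (∑ i ∈ Icc (1:ℤ) (m-1), F i) + F m + (∑ i ∈ Icc (1:ℤ) (m-1), F (i+m)) := by
  have hsplit : Icc (1:ℤ) (2*m-1) = Icc 1 m ∪ Icc (m+1) (2*m-1) := by
    ext a; simp only [Finset.mem_union, Finset.mem_Icc]; omega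
  rw [hsplit, Finset.sum_union (by
    rw [Finset.disjoint_left]
    intro a ha hb
    simp only [Finset.mem_Icc] at ha hb
    omega)]
  rw [show Icc (1:ℤ) m = insert m (Icc 1 (m-1)) from by
      ext a; simp only [Finset.mem_insert, Finset.mem_Icc]; omega,
    Finset.sum_insert (by simp only [Finset.mem_Icc]; omega)]
  have reindex : ∑ j ∈ Icc (m+1) (2*m-1), F j = ∑ i ∈ Icc (1:ℤ) (m-1), F (i+m) := by
    refine Finset.sum_nbij' (fun j => j - m) (fun i => i + m) ?_ ?_ ?_ ?_ ?_ <;>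
      intro a ha <;> simp only [Finset.mem_Icc] at ha ⊢
    · omega
    · omega
    · omega
    · omega
    · exact congrArg F (by omega)
  rw [reindex]
  ring

lemma collapse (a m : ℤ) (hm : 0 < m) : dedekindS (2*a) (2*m) = dedekindS a m := by
  have hm0 : (m:ℚ) ≠ 0 := by positivity
  unfold dedekindS
  rw [sum_split m hm (fun j => saw (((2*a*j : ℤ):ℚ)/((2*m : ℤ):ℚ)) * saw ((j:ℚ)/((2*m:ℤ):ℚ)))]
  have hmid : saw (((2*a*m : ℤ):ℚ)/((2*m : ℤ):ℚ)) * saw ((m:ℚ)/((2*m:ℤ):ℚ)) = 0 := by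
    have e : ((2*a*m : ℤ):ℚ)/((2*m : ℤ):ℚ) = ((a:ℤ):ℚ) := by push_cast; field_simp
    rw [e, saw_intCast]; ring
  rw [hmid]
  have key : ∀ i ∈ Icc (1:ℤ) (m-1),
      saw (((2*a*i : ℤ):ℚ)/((2*m:ℤ):ℚ)) * saw ((i:ℚ)/((2*m:ℤ):ℚ))
        + saw (((2*a*(i+m) : ℤ):ℚ)/((2*m:ℤ):ℚ)) * saw (((i+m : ℤ):ℚ)/((2*m:ℤ):ℚ))
      = saw (((a*i : ℤ):ℚ)/((m:ℤ):ℚ)) * saw ((i:ℚ)/((m:ℤ):ℚ)) := by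
    intro i hi
    have A1 : ((2*a*i : ℤ):ℚ)/((2*m:ℤ):ℚ) = ((a*i : ℤ):ℚ)/((m:ℤ):ℚ) := by
      push_cast; field_simp
    have A2 : ((2*a*(i+m) : ℤ):ℚ)/((2*m:ℤ):ℚ) = ((a*i : ℤ):ℚ)/((m:ℤ):ℚ) + ((a:ℤ):ℚ) := by
      push_cast; field_simp
    have A3 : ((i+m : ℤ):ℚ)/((2*m:ℤ):ℚ) = (i:ℚ)/((2*m:ℤ):ℚ) + 1/2 := by
      push_cast; field_simp
    have A4 : 2*((i:ℚ)/((2*m:ℤ):ℚ)) = (i:ℚ)/((m:ℤ):ℚ) := by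
      push_cast; field_simp
    rw [A1, A2, saw_add_int, A3]
    rw [← mul_add, saw_half, A4]
  rw [show (∑ i ∈ Icc (1:ℤ) (m-1), saw (((2*a*i : ℤ):ℚ)/((2*m:ℤ):ℚ)) * saw ((i:ℚ)/((2*m:ℤ):ℚ)))
        + 0 + (∑ i ∈ Icc (1:ℤ) (m-1), saw (((2*a*(i+m) : ℤ):ℚ)/((2*m:ℤ):ℚ)) * saw (((i+m : ℤ):ℚ)/((2*m:ℤ):ℚ)))
      = ∑ i ∈ Icc (1:ℤ) (m-1), (saw (((2*a*i : ℤ):ℚ)/((2*m:ℤ):ℚ)) * saw ((i:ℚ)/((2*m:ℤ):ℚ))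
        + saw (((2*a*(i+m) : ℤ):ℚ)/((2*m:ℤ):ℚ)) * saw (((i+m : ℤ):ℚ)/((2*m:ℤ):ℚ))) from by
      rw [Finset.sum_add_distrib]; ring]
  exact Finset.sum_congr rfl key

lemma dedekindS_period (a c m : ℤ) (hm : 0 < m) : dedekindS (a + c*m) m = dedekindS a m := by
  unfold dedekindS
  refine Finset.sum_congr rfl ?_
  intro j _
  have hm0 : (m:ℚ) ≠ 0 := by positivity
  have e : (((a + c*m)*j : ℤ):ℚ)/((m:ℤ):ℚ) = ((a*j:ℤ):ℚ)/((m:ℤ):ℚ) + ((c*j : ℤ):ℚ) := by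
    push_cast; field_simp
  rw [e, saw_add_int]

lemma dedekindS_neg (a m : ℤ) : dedekindS (-a) m = - dedekindS a m := by
  unfold dedekindS
  rw [← Finset.sum_neg_distrib]
  refine Finset.sum_congr rfl ?_
  intro j _
  have e : (((-a)*j : ℤ):ℚ)/((m:ℤ):ℚ) = -(((a*j:ℤ):ℚ)/((m:ℤ):ℚ)) := by push_cast; ring
  rw [e, saw_neg]
  ring

lemma Ssum_period (a t k : ℤ) (hk : 0 < k) : Ssum (a + 2*k*t) k = Ssum a k := by
  unfold Ssum
  refine Finset.sum_congr rfl ?_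
  intro j _
  have e1 : (a + 2*k*t)*j = a*j + (2*t*j)*k := by ring
  have e2 : (a*j + (2*t*j)*k)/k = a*j/k + 2*t*j := Int.add_mul_ediv_right _ _ (by omega)
  rw [e1, e2]
  exact zpow_neg_one_congr (by rw [show 2*t*j = 2*(t*j) from by ring]; omega)

lemma Ssum_neg (a t k : ℤ) (hk : 0 < k) (hco : IsCoprime a k) :
    Ssum (2*k*t - a) k = - Ssum a k := by
  unfold Ssum
  rw [← Finset.sum_neg_distrib]
  refine Finset.sum_congr rfl ?_
  intro j hj
  simp only [Finset.mem_Icc] at hj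
  have hnd := not_dvd_mul a k j hco hj.1 hj.2
  have e1 : (2*k*t - a)*j = -(a*j) + (2*t*j)*k := by ring
  have e2 : (-(a*j) + (2*t*j)*k)/k = (-(a*j))/k + 2*t*j := Int.add_mul_ediv_right _ _ (by omega)
  have e3 : (-(a*j))/k = -(a*j/k) - 1 := neg_ediv _ _ hk hnd
  rw [e1, e2, e3]
  exact zpow_neg_one_flip (by rw [show 2*t*j = 2*(t*j) from by ring]; omega)

lemma D_period (a t k : ℤ) (hk : 0 < k) : Dfun (a + 2*k*t) k = Dfun a k := by
  unfold Dfun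
  have p1 : dedekindS (a + 2*k*t) (2*k) = dedekindS a (2*k) := by
    rw [show a + 2*k*t = a + t*(2*k) from by ring]
    exact dedekindS_period a t (2*k) (by omega)
  have p2 : dedekindS (2*(a + 2*k*t)) k = dedekindS (2*a) k := by
    rw [show 2*(a + 2*k*t) = 2*a + (4*t)*k from by ring]
    exact dedekindS_period (2*a) (4*t) k hk
  have p3 : dedekindS (a + 2*k*t) k = dedekindS a k := by
    rw [show a + 2*k*t = a + (2*t)*k from by ring]
    exact dedekindS_period a (2*t) k hk
  rw [p1, p2, p3]

lemma D_neg (a t k : ℤ) (hk : 0 < k) : Dfun (2*k*t - a) k = - Dfun a k := by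
  unfold Dfun
  have p1 : dedekindS (2*k*t - a) (2*k) = - dedekindS a (2*k) := by
    rw [show 2*k*t - a = -a + t*(2*k) from by ring,
      dedekindS_period (-a) t (2*k) (by omega), dedekindS_neg]
  have p2 : dedekindS (2*(2*k*t - a)) k = - dedekindS (2*a) k := by
    rw [show 2*(2*k*t - a) = -(2*a) + (4*t)*k from by ring,
      dedekindS_period (-(2*a)) (4*t) k hk, dedekindS_neg]
  have p3 : dedekindS (2*k*t - a) k = - dedekindS a k := by
    rw [show 2*k*t - a = -a + (2*t)*k from by ring,
      dedekindS_period (-a) (2*t) k hk, dedekindS_neg]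
  rw [p1, p2, p3]
  ring

lemma coprime_two (x : ℤ) (hx : Odd x) : IsCoprime (2:ℤ) x := by
  obtain ⟨t, ht⟩ := hx
  exact ⟨-t, 1, by omega⟩

lemma D_rec (h k : ℤ) (hh : 0 < h) (hk : 0 < k) (hco : IsCoprime h k) (hodd : Odd (h+k)) :
    Dfun h k + Dfun k h = 1/2 := by
  rcases Int.even_or_odd h with he | ho
  · -- h even, k odd
    have hko : Odd k := by
      rcases Int.even_or_odd k with hke | hko
      · exfalso
        rcases he with ⟨u,hu⟩; rcases hke with ⟨v,hv⟩; rcases hodd with ⟨w,hw⟩; omega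
      · exact hko
    obtain ⟨M, hM⟩ := he
    have hM2 : h = 2*M := by omega
    subst hM2
    have hMpos : 0 < M := by omega
    have hcoM : IsCoprime M k := hco.of_isCoprime_of_dvd_left ⟨2, by ring⟩
    have c1 : dedekindS (2*M) (2*k) = dedekindS M k := collapse M k hk
    have c2 : dedekindS (2*k) (2*M) = dedekindS k M := collapse k M hMpos
    have co2h : IsCoprime (2*(2*M)) k := ((coprime_two k hko).mul_left hco)
    have r1 := dedekind_rec M k hMpos hk hcoM
    have r2 := dedekind_rec (2*(2*M)) k (by omega) hk co2h
    have r3 := dedekind_rec (2*M) k (by omega) hk hco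
    unfold Dfun
    rw [c1, c2]
    push_cast at r1 r2 r3 ⊢
    have hMq : (M:ℚ) ≠ 0 := by positivity
    have hkq : (k:ℚ) ≠ 0 := by positivity
    have v1 : dedekindS M k + dedekindS k M
        = ((M:ℚ)^2+(k:ℚ)^2+1-3*(M:ℚ)*(k:ℚ))/(12*(M:ℚ)*(k:ℚ)) := by
      rw [eq_div_iff (by positivity)]
      linear_combination r1
    have v2 : dedekindS (2*(2*M)) k + dedekindS k (2*(2*M))
        = ((4*(M:ℚ))^2+(k:ℚ)^2+1-3*(4*(M:ℚ))*(k:ℚ))/(12*(4*(M:ℚ))*(k:ℚ)) := by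
      rw [eq_div_iff (by positivity)]
      linear_combination r2
    have v3 : dedekindS (2*M) k + dedekindS k (2*M)
        = ((2*(M:ℚ))^2+(k:ℚ)^2+1-3*(2*(M:ℚ))*(k:ℚ))/(12*(2*(M:ℚ))*(k:ℚ)) := by
      rw [eq_div_iff (by positivity)]
      linear_combination r3
    have final : 4*(dedekindS M k + dedekindS k M)
          + 4*(dedekindS (2*(2*M)) k + dedekindS k (2*(2*M)))
          - 10*(dedekindS (2*M) k + dedekindS k (2*M)) = 1/2 := by
      rw [v1, v2, v3]
      field_simp
      ring
    linarith
  · -- h odd, k even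
    have hke : Even k := by
      rcases Int.even_or_odd k with hke | hko
      · exact hke
      · exfalso
        rcases ho with ⟨u,hu⟩; rcases hko with ⟨v,hv⟩; rcases hodd with ⟨w,hw⟩; omega
    obtain ⟨K, hK⟩ := hke
    have hK2 : k = 2*K := by omega
    subst hK2
    have hKpos : 0 < K := by omega
    have htwo : IsCoprime h 2 := (coprime_two h ho).symm
    have hcoK : IsCoprime h K := hco.of_isCoprime_of_dvd_right ⟨2, by ring⟩
    have c1 : dedekindS (2*h) (2*K) = dedekindS h K := collapse h K hKpos
    have c2 : dedekindS (2*K) (2*h) = dedekindS K h := collapse K h hh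
    have hco2K : IsCoprime h (2*K) := htwo.mul_right hcoK
    have hco4K : IsCoprime h (2*(2*K)) := htwo.mul_right hco2K
    have r1 := dedekind_rec h K hh hKpos hcoK
    have r2 := dedekind_rec h (2*(2*K)) hh (by omega) hco4K
    have r3 := dedekind_rec h (2*K) hh (by omega) hco2K
    unfold Dfun
    rw [c1, c2]
    push_cast at r1 r2 r3 ⊢
    have hhq : (h:ℚ) ≠ 0 := by positivity
    have hKq : (K:ℚ) ≠ 0 := by positivity
    have v1 : dedekindS h K + dedekindS K h
        = ((h:ℚ)^2+(K:ℚ)^2+1-3*(h:ℚ)*(K:ℚ))/(12*(h:ℚ)*(K:ℚ)) := by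
      rw [eq_div_iff (by positivity)]
      linear_combination r1
    have v2 : dedekindS h (2*(2*K)) + dedekindS (2*(2*K)) h
        = ((h:ℚ)^2+(4*(K:ℚ))^2+1-3*(h:ℚ)*(4*(K:ℚ)))/(12*(h:ℚ)*(4*(K:ℚ))) := by
      rw [eq_div_iff (by positivity)]
      linear_combination r2
    have v3 : dedekindS h (2*K) + dedekindS (2*K) h
        = ((h:ℚ)^2+(2*(K:ℚ))^2+1-3*(h:ℚ)*(2*(K:ℚ)))/(12*(h:ℚ)*(2*(K:ℚ))) := by
      rw [eq_div_iff (by positivity)]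
      linear_combination r3
    have final : 4*(dedekindS h (2*(2*K)) + dedekindS (2*(2*K)) h)
          + 4*(dedekindS h K + dedekindS K h)
          - 10*(dedekindS h (2*K) + dedekindS (2*K) h) = 1/2 := by
      rw [v1, v2, v3]
      field_simp
      ring
    linarith

theorem keyP : ∀ n : ℕ, ∀ h k : ℤ, k ≤ (n:ℤ) → 0 < h → 0 < k → IsCoprime h k → Odd (h+k) →
    Dfun h k = - Ssum h k / 2 := by
  intro n
  induction n with
  | zero =>
    intro h k h1 _ h3 _ _
    exfalso
    have h0 : ((0:ℕ):ℤ) = 0 := rfl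
    omega
  | succ n ih =>
    intro h k hkn hh hk hco hodd
    by_cases hk1 : k = 1
    · subst hk1
      have e1 : dedekindS h (2*1) = 0 := by
        unfold dedekindS
        rw [show Icc (1:ℤ) (2*1-1) = {1} from by norm_num]
        rw [Finset.sum_singleton]
        have e : ((1:ℤ):ℚ)/(((2*1:ℤ)):ℚ) = 1/2 := by norm_num
        rw [e]
        have e2 : saw ((1:ℚ)/2) = 0 := by
          have hf : ⌊(1:ℚ)/2⌋ = 0 := by norm_num
          rw [saw, hf]
          norm_num
        rw [show (1:ℚ)/2 = 1/2 from rfl] at e2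
        rw [e2]
        ring
      have e2 : dedekindS (2*h) 1 = 0 := by
        unfold dedekindS
        rw [show Icc (1:ℤ) (1-1 : ℤ) = ∅ from by norm_num [Finset.Icc_eq_empty_iff]]
        exact Finset.sum_empty
      have e3 : dedekindS h 1 = 0 := by
        unfold dedekindS
        rw [show Icc (1:ℤ) (1-1 : ℤ) = ∅ from by norm_num [Finset.Icc_eq_empty_iff]]
        exact Finset.sum_empty
      have e4 : Ssum h 1 = 0 := by
        unfold Ssum
        rw [show Icc (1:ℤ) (1-1 : ℤ) = ∅ from by norm_num [Finset.Icc_eq_empty_iff]]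
        exact Finset.sum_empty
      unfold Dfun
      rw [e1, e2, e3, e4]
      norm_num
    · have hk2 : 2 ≤ k := by omega
      have hknotdvd : ¬ k ∣ h := by
        intro hd
        have hu : IsUnit k := hco.isUnit_of_dvd' hd dvd_rfl
        rw [Int.isUnit_iff] at hu
        omega
      have h2k : (0:ℤ) < 2*k := by omega
      have hre := Int.emod_add_mul_ediv h (2*k)
      set q := h / (2*k) with hq
      set r := h % (2*k) with hrdef
      have hr0 : 0 ≤ r := Int.emod_nonneg h (by omega)
      have hrlt : r < 2*k := Int.emod_lt_of_pos h h2k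
      have hrne0 : r ≠ 0 := by
        intro h0
        exact hknotdvd ⟨2*q, by linarith [hre]⟩
      have hrnek : r ≠ k := by
        intro h0
        exact hknotdvd ⟨1+2*q, by linarith [hre]⟩
      have hparity : (h - r) % 2 = 0 := by
        have he2 : Even (h - r) := ⟨k*q, by linarith [hre]⟩
        exact Int.even_iff.mp he2
      have hkn' : k ≤ (n:ℤ) + 1 := by push_cast at hkn; omega
      rcases lt_or_gt_of_ne hrnek with hrk | hrk
      · have hr1 : 0 < r := by omega
        have hoddr : Odd (r + k) := by
          rw [Int.odd_iff] at hodd ⊢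
          omega
        have hcor : IsCoprime r k := by
          have e : r = h + k*(-(2*q)) := by
            rw [show k*(-(2*q)) = -(2*k*q) from by ring]
            linarith [hre]
          rw [e]
          exact hco.add_mul_left_left (-(2*q))
        have hDp : Dfun h k = Dfun r k := by
          rw [show h = r + 2*k*q from by linarith [hre]]
          exact D_period r q k hk
        have hSp : Ssum h k = Ssum r k := by
          rw [show h = r + 2*k*q from by linarith [hre]]
          exact Ssum_period r q k hk
        have hDrec := D_rec r k hr1 hk hcor hoddr
        have hHrec := hardy_rec r k hr1 hk hcor hoddr
        have hIH := ih k r (by omega) hk hr1 hcor.symm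
          (by rw [Int.odd_iff] at hoddr ⊢; omega)
        rw [hDp, hSp]
        linarith
      · set s := 2*k - r with hs
        have hs1 : 0 < s := by omega
        have hsk : s < k := by omega
        have hodds : Odd (s + k) := by
          rw [Int.odd_iff] at hodd ⊢
          omega
        have hcos : IsCoprime s k := by
          have e : s = -h + k*(2*q+2) := by
            rw [show k*(2*q+2) = 2*k*q + 2*k from by ring]
            linarith [hre]
          rw [e]
          exact (hco.neg_left).add_mul_left_left (2*q+2)
        have hDp : Dfun h k = - Dfun s k := by
          rw [show h = 2*k*(q+1) - s from by
            rw [show 2*k*(q+1) = 2*k*q + 2*k from by ring]; linarith [hre]]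
          exact D_neg s (q+1) k hk
        have hSp : Ssum h k = - Ssum s k := by
          rw [show h = 2*k*(q+1) - s from by
            rw [show 2*k*(q+1) = 2*k*q + 2*k from by ring]; linarith [hre]]
          exact Ssum_neg s (q+1) k hk hcos
        have hDrec := D_rec s k hs1 hk hcos hodds
        have hHrec := hardy_rec s k hs1 hk hcos hodds
        have hIH := ih k s (by omega) hk hs1 hcos.symm
          (by rw [Int.odd_iff] at hodds ⊢; omega)
        rw [hDp, hSp]
        linarith

theorem stmt7_final (h k : ℤ) (hh : 0 < h) (hk : 0 < k) (hco : IsCoprime h k)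
    (hodd : Odd (h + k)) :
    B1 h k = (1 - (h : ℚ))
      * (4 * dedekindS h (2 * k) + 4 * dedekindS (2 * h) k - 10 * dedekindS h k) := by
  have hB := B1_Ssum h k hh hk hco hodd
  have hD : Dfun h k = - Ssum h k / 2 :=
    keyP k.toNat h k (le_of_eq (Int.toNat_of_nonneg hk.le).symm) hh hk hco hodd
  have hDf : 4 * dedekindS h (2 * k) + 4 * dedekindS (2 * h) k - 10 * dedekindS h k
      = Dfun h k := rfl
  rw [hDf, hD]
  linarith

end Aux7

theorem stmt_7 (h k : ℤ) (hh : 0 < h) (hk : 0 < k) (hco : IsCoprime h k)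
    (hodd : Odd (h + k)) :
    B1 h k = (1 - (h : ℚ))
      * (4 * dedekindS h (2 * k) + 4 * dedekindS (2 * h) k - 10 * dedekindS h k) := by
  have hB := Aux7.B1_Ssum h k hh hk hco hodd
  have hD : Aux7.Dfun h k = - Aux7.Ssum h k / 2 :=
    Aux7.keyP k.toNat h k (le_of_eq (Int.toNat_of_nonneg hk.le).symm) hh hk hco hodd
  have hDf : 4 * dedekindS h (2 * k) + 4 * dedekindS (2 * h) k - 10 * dedekindS h k
      = Aux7.Dfun h k := rfl
  rw [hDf, hD]
  linarith
end

section
/- Let h and k be coprime positive integers with h + k odd. Then B₁(h,k) = 2·(1-h)·(s(h,k) - 2·s(h+k,2k)). -/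
lemma floorQ_s8 (m n : ℤ) (hn : 0 < n) : ⌊(m:ℚ)/(n:ℚ)⌋ = m / n := by
  lift n to ℕ using hn.le
  exact_mod_cast Rat.floor_intCast_div_natCast m n

lemma saw_eq {m n : ℤ} (hn : 0 < n) (hnd : ¬ n ∣ m) :
    saw ((m:ℚ)/(n:ℚ)) = ((m % n : ℤ):ℚ)/(n:ℚ) - 1/2 := by
  have hk0 : (n:ℚ) ≠ 0 := by exact_mod_cast hn.ne'
  have hfl : ⌊(m:ℚ)/(n:ℚ)⌋ = m / n := floorQ_s8 m n hn
  have hne : (m:ℚ)/(n:ℚ) ≠ ((⌊(m:ℚ)/(n:ℚ)⌋ : ℤ) : ℚ) := by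
    rw [hfl]
    intro hcon
    apply hnd
    refine ⟨m / n, ?_⟩
    have : (m:ℚ) = (n:ℚ) * ((m/n : ℤ) : ℚ) := by
      field_simp at hcon ⊢
      linarith [hcon]
    exact_mod_cast this
  rw [saw, if_neg hne, hfl]
  have hmod : (m % n : ℤ) = m - n * (m/n) := by rw [Int.emod_def]
  have hc : ((m % n : ℤ):ℚ) = (m:ℚ) - (n:ℚ) * ((m/n : ℤ):ℚ) := by exact_mod_cast hmod
  rw [hc]
  field_simp

lemma emod_eq_target {m n t : ℤ} (hn : 0 < n) (h0 : 0 ≤ t) (h1 : t < n) (c : ℤ)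
    (heq : m = t + n * c) : m % n = t := by
  rw [heq, Int.add_mul_emod_self_left, Int.emod_eq_of_lt h0 h1]

lemma sum_reflect (k : ℤ) (F : ℤ → ℚ) :
    ∑ j ∈ Finset.Icc (1:ℤ) (k-1), F j = ∑ j ∈ Finset.Icc (1:ℤ) (k-1), F (k - j) := by
  have himg : (Finset.Icc (1:ℤ) (k-1)).image (fun j => k - j) = Finset.Icc 1 (k-1) := by
    ext x
    simp only [Finset.mem_image, Finset.mem_Icc]
    constructor
    · rintro ⟨j, hj, rfl⟩; omega
    · intro hx; exact ⟨k - x, by omega, by omega⟩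
  conv_lhs => rw [← himg]
  rw [Finset.sum_image (by intro a _ b _ hab; simp only at hab; omega)]

lemma sum_split (k : ℤ) (hk : 0 < k) (F : ℤ → ℚ) :
    ∑ j ∈ Finset.Icc (1:ℤ) (2*k-1), F j
      = (∑ j ∈ Finset.Icc (1:ℤ) (k-1), (F j + F (2*k - j))) + F k := by
  have himg : (Finset.Icc (1:ℤ) (k-1)).image (fun j => 2*k - j) = Finset.Icc (k+1) (2*k-1) := by
    ext x
    simp only [Finset.mem_image, Finset.mem_Icc]
    constructor
    · rintro ⟨j, hj, rfl⟩; omega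
    · intro hx; exact ⟨2*k - x, by omega, by omega⟩
  have hsplit : Finset.Icc (1:ℤ) (2*k-1)
      = (Finset.Icc (1:ℤ) (k-1) ∪ Finset.Icc (k+1) (2*k-1)) ∪ {k} := by
    ext x
    simp only [Finset.mem_union, Finset.mem_Icc, Finset.mem_singleton]
    omega
  rw [hsplit, Finset.sum_union (by
        simp only [Finset.disjoint_left, Finset.mem_union, Finset.mem_Icc, Finset.mem_singleton]
        omega),
      Finset.sum_union (by
        simp only [Finset.disjoint_left, Finset.mem_Icc]
        omega),
      Finset.sum_singleton, ← himg,
      Finset.sum_image (by intro a _ b _ hab; simp only at hab; omega), ← Finset.sum_add_distrib]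

def Sf (h k j : ℤ) : ℚ := ((h*j % k : ℤ) : ℚ)/(k:ℚ) - 1/2
def gf (h k j : ℤ) : ℚ := (((h+k)*j % (2*k) : ℤ) : ℚ)/(2*(k:ℚ)) - 1/2

section
variable {h k j : ℤ}

lemma Sf_neg (hk : 0 < k) (hnd : ¬ k ∣ h*j) : Sf h k (k - j) = - Sf h k j := by
  have hb0 : 0 ≤ h*j % k := Int.emod_nonneg _ hk.ne'
  have hb1 : h*j % k < k := Int.emod_lt_of_pos _ hk
  have hne : h*j % k ≠ 0 := fun hc => hnd (Int.dvd_of_emod_eq_zero hc)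
  have hde := Int.mul_ediv_add_emod (h*j) k
  have key : h*(k-j) % k = k - h*j % k := by
    apply emod_eq_target hk (by omega) (by omega) (h - 1 - h*j/k)
    linear_combination hde
  have hkQ : (k:ℚ) ≠ 0 := by exact_mod_cast hk.ne'
  simp only [Sf]
  rw [key]
  push_cast
  field_simp
  ring

lemma gf_neg (hk : 0 < k) (hnd : ¬ (2*k) ∣ (h+k)*j) : gf h k (2*k - j) = - gf h k j := by
  have h2k : (0:ℤ) < 2*k := by omega
  have hb0 : 0 ≤ (h+k)*j % (2*k) := Int.emod_nonneg _ h2k.ne'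
  have hb1 : (h+k)*j % (2*k) < 2*k := Int.emod_lt_of_pos _ h2k
  have hne : (h+k)*j % (2*k) ≠ 0 := fun hc => hnd (Int.dvd_of_emod_eq_zero hc)
  have hqr := Int.mul_ediv_add_emod ((h+k)*j) (2*k)
  have key : (h+k)*(2*k - j) % (2*k) = 2*k - (h+k)*j % (2*k) := by
    apply emod_eq_target h2k (by omega) (by omega) ((h+k) - 1 - (h+k)*j/(2*k))
    linear_combination hqr
  have hkQ : (k:ℚ) ≠ 0 := by exact_mod_cast hk.ne'
  simp only [gf]
  rw [key]
  push_cast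
  field_simp
  ring

lemma Sf_dup (hk : 0 < k) (hodd : Odd (h+k)) (hnda : ¬ k ∣ (h+k)*j) :
    Sf h k j = gf h k j + gf h k (j + k) := by
  have h2k : (0:ℤ) < 2*k := by omega
  obtain ⟨c, hc⟩ := hodd
  have hqr := Int.mul_ediv_add_emod ((h+k)*j) (2*k)
  have hb0 : 0 ≤ (h+k)*j % (2*k) := Int.emod_nonneg _ h2k.ne'
  have hb1 : (h+k)*j % (2*k) < 2*k := Int.emod_lt_of_pos _ h2k
  have hrk : (h+k)*j % (2*k) ≠ k := by
    intro hcon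
    exact hnda ⟨2*((h+k)*j/(2*k)) + 1, by linear_combination -hqr + hcon⟩
  have hne : (h+k)*j % (2*k) ≠ 0 := by
    intro hcon
    exact hnda ⟨2*((h+k)*j/(2*k)), by linear_combination -hqr + hcon⟩
  have key1 : h*j % k = (h+k)*j % (2*k) % k := by
    have e1 : (h+k)*j % k = h*j % k := by
      rw [show (h+k)*j = h*j + k*j by ring, Int.add_mul_emod_self_left]
    have e2 : (h+k)*j % (2*k) % k = (h+k)*j % k := Int.emod_emod_of_dvd _ ⟨2, by ring⟩
    rw [e2, e1]
  have key2 : (h+k)*(j+k) % (2*k) = ((h+k)*j % (2*k) + k) % (2*k) := by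
    rw [show (h+k)*(j+k) = ((h+k)*j % (2*k) + k) + (2*k)*((h+k)*j/(2*k) + c) by
      linear_combination -hqr + k*hc]
    rw [Int.add_mul_emod_self_left]
  have hkQ : (k:ℚ) ≠ 0 := by exact_mod_cast hk.ne'
  rcases lt_or_gt_of_ne hrk with hlt | hgt
  · have e3 : (h+k)*j % (2*k) % k = (h+k)*j % (2*k) := Int.emod_eq_of_lt hb0 hlt
    have e4 : ((h+k)*j % (2*k) + k) % (2*k) = (h+k)*j % (2*k) + k :=
      Int.emod_eq_of_lt (by omega) (by omega)
    simp only [Sf, gf]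
    rw [key1, key2, e3, e4]
    push_cast
    field_simp
    ring
  · have e3 : (h+k)*j % (2*k) % k = (h+k)*j % (2*k) - k :=
      emod_eq_target hk (by omega) (by omega) 1 (by ring)
    have e4 : ((h+k)*j % (2*k) + k) % (2*k) = (h+k)*j % (2*k) - k :=
      emod_eq_target h2k (by omega) (by omega) 1 (by ring)
    simp only [Sf, gf]
    rw [key1, key2, e3, e4]
    push_cast
    field_simp
    ring

lemma pointwise (hk : 0 < k) (hndk : ¬ k ∣ h*j) (hnda : ¬ k ∣ (h+k)*j) :
    (-1 : ℚ) ^ (j + ⌊((h * j : ℤ) : ℚ) / (k : ℚ)⌋) * (⌊((h * j : ℤ) : ℚ) / (k : ℚ)⌋ : ℚ)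
      = 2*(Sf h k j - 2*gf h k j) * (((h * j : ℤ) : ℚ)/(k:ℚ) - 1/2 - Sf h k j) := by
  have h2k : (0:ℤ) < 2*k := by omega
  have hkQ : (k:ℚ) ≠ 0 := by exact_mod_cast hk.ne'
  have hfl : ⌊((h * j : ℤ) : ℚ) / (k : ℚ)⌋ = h*j/k := floorQ_s8 (h*j) k hk
  have hde := Int.mul_ediv_add_emod (h*j) k
  have hqr := Int.mul_ediv_add_emod ((h+k)*j) (2*k)
  have hb0 : 0 ≤ (h+k)*j % (2*k) := Int.emod_nonneg _ h2k.ne'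
  have hb1 : (h+k)*j % (2*k) < 2*k := Int.emod_lt_of_pos _ h2k
  have he0 : 0 ≤ h*j % k := Int.emod_nonneg _ hk.ne'
  have he1 : h*j % k < k := Int.emod_lt_of_pos _ hk
  have hene : h*j % k ≠ 0 := fun hc => hndk (Int.dvd_of_emod_eq_zero hc)
  have hrk : (h+k)*j % (2*k) ≠ k := by
    intro hcon
    exact hnda ⟨2*((h+k)*j/(2*k)) + 1, by linear_combination -hqr + hcon⟩
  have key1 : h*j % k = (h+k)*j % (2*k) % k := by
    have e1 : (h+k)*j % k = h*j % k := by
      rw [show (h+k)*j = h*j + k*j by ring, Int.add_mul_emod_self_left]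
    have e2 : (h+k)*j % (2*k) % k = (h+k)*j % k := Int.emod_emod_of_dvd _ ⟨2, by ring⟩
    rw [e2, e1]
  have hcast : ((⌊((h * j : ℤ) : ℚ) / (k : ℚ)⌋ : ℤ) : ℚ)
      = ((h * j : ℤ) : ℚ)/(k:ℚ) - 1/2 - Sf h k j := by
    rw [hfl]
    have hint : (h*j/k)*k = h*j - h*j % k := by linear_combination hde
    have hq : ((h*j/k : ℤ):ℚ) = (((h*j : ℤ):ℚ) - ((h*j % k : ℤ):ℚ))/(k:ℚ) := by
      rw [eq_div_iff hkQ]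
      exact_mod_cast hint
    rw [hq]
    simp only [Sf]
    ring
  rcases lt_or_gt_of_ne hrk with hlt | hgt
  · have he : h*j % k = (h+k)*j % (2*k) := by rw [key1, Int.emod_eq_of_lt hb0 hlt]
    have hpar : Even (j + h*j/k) := by
      refine ⟨(h+k)*j/(2*k), mul_left_cancel₀ hk.ne' ?_⟩
      linear_combination hde - hqr - he
    have hpow : (-1 : ℚ) ^ (j + ⌊((h * j : ℤ) : ℚ) / (k : ℚ)⌋) = 1 := by
      rw [hfl]; exact hpar.neg_one_zpow
    have hval : 2*(Sf h k j - 2*gf h k j) = 1 := by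
      simp only [Sf, gf]
      rw [he]
      field_simp
      ring
    rw [hpow, hcast, hval]
  · have he : h*j % k = (h+k)*j % (2*k) - k := by
      rw [key1]; exact emod_eq_target hk (by omega) (by omega) 1 (by ring)
    have hpar : Odd (j + h*j/k) := by
      refine ⟨(h+k)*j/(2*k), mul_left_cancel₀ hk.ne' ?_⟩
      linear_combination hde - hqr - he
    have hpow : (-1 : ℚ) ^ (j + ⌊((h * j : ℤ) : ℚ) / (k : ℚ)⌋) = -1 := by
      rw [hfl]; exact hpar.neg_one_zpow
    have hval : 2*(Sf h k j - 2*gf h k j) = -1 := by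
      simp only [Sf, gf]
      rw [he]
      push_cast
      field_simp
      ring
    rw [hpow, hcast, hval]

end

theorem stmt_8 (h k : ℤ) (hh : 0 < h) (hk : 0 < k) (hco : IsCoprime h k)
    (hodd : Odd (h + k)) :
    B1 h k = 2 * (1 - (h : ℚ)) * (dedekindS h k - 2 * dedekindS (h + k) (2 * k)) := by
  have h2k : (0:ℤ) < 2*k := by omega
  have hkQ : (k:ℚ) ≠ 0 := by exact_mod_cast hk.ne'
  have hcop2 : IsCoprime (h+k) k := by
    have := hco.add_mul_left_left 1
    rwa [mul_one] at this
  have hndk : ∀ j : ℤ, 1 ≤ j → j ≤ k - 1 → ¬ k ∣ j := by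
    intro j h1 h2 hd
    have := Int.le_of_dvd (by omega) hd
    omega
  have hndh : ∀ j : ℤ, 1 ≤ j → j ≤ k - 1 → ¬ k ∣ h*j := by
    intro j h1 h2 hd
    exact hndk j h1 h2 (hco.symm.dvd_of_dvd_mul_left hd)
  have hnda : ∀ j : ℤ, 1 ≤ j → j ≤ k - 1 → ¬ k ∣ (h+k)*j := by
    intro j h1 h2 hd
    exact hndk j h1 h2 (hcop2.symm.dvd_of_dvd_mul_left hd)
  have hcopa2 : IsCoprime (h+k) (2:ℤ) := by
    obtain ⟨c, hc⟩ := hodd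
    exact ⟨1, -c, by linarith⟩
  have hcopa2k : IsCoprime (h+k) (2*k) := hcopa2.mul_right hcop2
  have hnd2a : ∀ j : ℤ, 1 ≤ j → j ≤ 2*k - 1 → ¬ (2*k) ∣ (h+k)*j := by
    intro j h1 h2 hd
    have hdj : (2*k) ∣ j := hcopa2k.symm.dvd_of_dvd_mul_left hd
    have := Int.le_of_dvd (by omega) hdj
    omega
  have hnd2j : ∀ j : ℤ, 1 ≤ j → j ≤ 2*k - 1 → ¬ (2*k) ∣ j := by
    intro j h1 h2 hd
    have := Int.le_of_dvd (by omega) hd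
    omega
  -- s1 in residue form
  have hs1 : dedekindS h k = ∑ j ∈ Finset.Icc (1:ℤ) (k-1), Sf h k j * ((j:ℚ)/(k:ℚ) - 1/2) := by
    unfold dedekindS
    apply Finset.sum_congr rfl
    intro j hj
    rw [Finset.mem_Icc] at hj
    rw [saw_eq hk (hndh j hj.1 hj.2), saw_eq hk (hndk j hj.1 hj.2),
        show j % k = j from Int.emod_eq_of_lt (by omega) (by omega)]
    rfl
  -- s2 in residue form
  have hs2' : dedekindS (h+k) (2*k) = ∑ j ∈ Finset.Icc (1:ℤ) (2*k-1),
      gf h k j * ((j:ℚ)/(2*(k:ℚ)) - 1/2) := by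
    unfold dedekindS
    rw [show 2*k - 1 = 2*k - 1 from rfl]
    apply Finset.sum_congr rfl
    intro j hj
    rw [Finset.mem_Icc] at hj
    rw [saw_eq h2k (hnd2a j hj.1 hj.2), saw_eq h2k (hnd2j j hj.1 hj.2),
        show j % (2*k) = j from Int.emod_eq_of_lt (by omega) (by omega)]
    simp only [gf]
    push_cast
    ring
  have hs2 : dedekindS (h+k) (2*k)
      = 2 * ∑ j ∈ Finset.Icc (1:ℤ) (k-1), gf h k j * ((j:ℚ)/(2*(k:ℚ)) - 1/2) := by
    have hsp := sum_split k hk (fun j => gf h k j * ((j:ℚ)/(2*(k:ℚ)) - 1/2))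
    rw [hs2', hsp]
    have hz : gf h k k * ((k:ℚ)/(2*(k:ℚ)) - 1/2) = 0 := by
      rw [show (k:ℚ)/(2*(k:ℚ)) - 1/2 = 0 by field_simp; ring]
      ring
    rw [hz, add_zero]
    rw [Finset.mul_sum]
    apply Finset.sum_congr rfl
    intro j hj
    rw [Finset.mem_Icc] at hj
    rw [gf_neg hk (hnd2a j (by omega) (by omega))]
    push_cast
    field_simp
    ring
  -- s1 via g
  have hs1g : dedekindS h k
      = 2 * ∑ j ∈ Finset.Icc (1:ℤ) (k-1), gf h k j * ((j:ℚ)/(k:ℚ) - 1/2) := by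
    rw [hs1]
    have step1 : ∑ j ∈ Finset.Icc (1:ℤ) (k-1), Sf h k j * ((j:ℚ)/(k:ℚ) - 1/2)
        = ∑ j ∈ Finset.Icc (1:ℤ) (k-1),
            (gf h k j * ((j:ℚ)/(k:ℚ) - 1/2) + gf h k (j+k) * ((j:ℚ)/(k:ℚ) - 1/2)) := by
      apply Finset.sum_congr rfl
      intro j hj
      rw [Finset.mem_Icc] at hj
      rw [Sf_dup hk hodd (hnda j hj.1 hj.2)]
      ring
    rw [step1, Finset.sum_add_distrib]
    have step2 : ∑ j ∈ Finset.Icc (1:ℤ) (k-1), gf h k (j+k) * ((j:ℚ)/(k:ℚ) - 1/2)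
        = ∑ j ∈ Finset.Icc (1:ℤ) (k-1), gf h k j * ((j:ℚ)/(k:ℚ) - 1/2) := by
      rw [sum_reflect k (fun j => gf h k (j+k) * ((j:ℚ)/(k:ℚ) - 1/2))]
      apply Finset.sum_congr rfl
      intro j hj
      rw [Finset.mem_Icc] at hj
      rw [show k - j + k = 2*k - j by ring, gf_neg hk (hnd2a j (by omega) (by omega))]
      push_cast
      field_simp
      ring
    rw [step2]
    ring
  -- U = s1 - 2 s2
  have hU : ∑ j ∈ Finset.Icc (1:ℤ) (k-1), gf h k j
      = dedekindS h k - 2 * dedekindS (h+k) (2*k) := by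
    rw [hs1g, hs2]
    rw [Finset.mul_sum, Finset.mul_sum, Finset.mul_sum, ← Finset.sum_sub_distrib]
    apply Finset.sum_congr rfl
    intro j hj
    field_simp
    ring
  -- sum of Sf = 0
  have hF1 : ∑ j ∈ Finset.Icc (1:ℤ) (k-1), Sf h k j = 0 := by
    have hr := sum_reflect k (fun j => Sf h k j)
    have : ∑ j ∈ Finset.Icc (1:ℤ) (k-1), Sf h k (k - j)
        = - ∑ j ∈ Finset.Icc (1:ℤ) (k-1), Sf h k j := by
      rw [← Finset.sum_neg_distrib]
      apply Finset.sum_congr rfl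
      intro j hj
      rw [Finset.mem_Icc] at hj
      exact Sf_neg hk (hndh j hj.1 hj.2)
    rw [this] at hr
    linarith
  -- sum Sf^2 = 2 sum gf*Sf
  have hF3 : ∑ j ∈ Finset.Icc (1:ℤ) (k-1), (Sf h k j)^2
      = 2 * ∑ j ∈ Finset.Icc (1:ℤ) (k-1), gf h k j * Sf h k j := by
    have step1 : ∑ j ∈ Finset.Icc (1:ℤ) (k-1), (Sf h k j)^2
        = ∑ j ∈ Finset.Icc (1:ℤ) (k-1),
            (gf h k j * Sf h k j + gf h k (j+k) * Sf h k j) := by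
      apply Finset.sum_congr rfl
      intro j hj
      rw [Finset.mem_Icc] at hj
      rw [sq]
      nth_rewrite 1 [Sf_dup hk hodd (hnda j hj.1 hj.2)]
      ring
    rw [step1, Finset.sum_add_distrib]
    have step2 : ∑ j ∈ Finset.Icc (1:ℤ) (k-1), gf h k (j+k) * Sf h k j
        = ∑ j ∈ Finset.Icc (1:ℤ) (k-1), gf h k j * Sf h k j := by
      rw [sum_reflect k (fun j => gf h k (j+k) * Sf h k j)]
      apply Finset.sum_congr rfl
      intro j hj
      rw [Finset.mem_Icc] at hj
      rw [show k - j + k = 2*k - j by ring, gf_neg hk (hnd2a j (by omega) (by omega)),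
          Sf_neg hk (hndh j hj.1 hj.2)]
      ring
    rw [step2]
    ring
  -- main expansion
  have hmain : B1 h k = ∑ j ∈ Finset.Icc (1:ℤ) (k-1),
      (2*(h:ℚ)*(Sf h k j * ((j:ℚ)/(k:ℚ) - 1/2)) + ((h:ℚ)-1)*Sf h k j
        - 2*(Sf h k j)^2 - 8*(h:ℚ)*(gf h k j * ((j:ℚ)/(2*(k:ℚ)) - 1/2))
        + (2-4*(h:ℚ))*gf h k j + 4*(gf h k j * Sf h k j)) := by
    unfold B1
    apply Finset.sum_congr rfl
    intro j hj
    rw [Finset.mem_Icc] at hj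
    rw [pointwise hk (hndh j hj.1 hj.2) (hnda j hj.1 hj.2)]
    push_cast
    field_simp
    ring
  rw [hmain]
  rw [Finset.sum_add_distrib, Finset.sum_add_distrib, Finset.sum_sub_distrib,
      Finset.sum_sub_distrib, Finset.sum_add_distrib, ← Finset.mul_sum, ← Finset.mul_sum,
      ← Finset.mul_sum, ← Finset.mul_sum, ← Finset.mul_sum, ← Finset.mul_sum]
  rw [hF1, hF3, hU, ← hs1]
  have hD : ∑ j ∈ Finset.Icc (1:ℤ) (k-1), gf h k j * ((j:ℚ)/(2*(k:ℚ)) - 1/2)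
      = dedekindS (h+k) (2*k) / 2 := by
    rw [hs2]; ring
  rw [hD]
  ring
end
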